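/- arXiv:1304.4440 — 7 statements merged into one kernel-verified Lean document; each statement's English description precedes it below -/
import Mathlib

section
/- Let O_K = ℤ[√−2] with norm N(a+b√−2) = a²+2b², let k be a positive integer, and let ρ : O_K^k → (O_K/3O_K)^k be componentwise reduction modulo 3O_K. For a coset r ∈ O_K/3O_K and real q with 0 < q < 1, set θ_r(q) = Σ_{x ∈ O_K, x ≡ r (mod 3O_K)} q^{N(x)/3}. Then for every (O_K/3O_K)-submodule C of (O_K/3O_K)^k (a code of length k over O_K/3O_K): Σ_{x ∈ ρ⁻¹(C)} q^{(N(x₁)+⋯+N(x_k))/3} = Σ_{c ∈ C} θ₀(q)^{n₀(c)} · θ₁(q)^{n₁(c)} · θ₂(q)^{n₂(c)} · θ₃(q)^{n₃(c)}, where n_l(c) is the number of coordinates cᵢ of c whose coset has length l (i.e. min{N(y) : y ∈ O_K, y mod 3O_K = cᵢ} = l), and θ_l denotes the common value of θ_r over all cosets r of length l, namely θ₀(q) = Σ_{a,b∈ℤ} q^{3a²+6b²}, θ₁(q) = Σ_{a,b∈ℤ} q^{3(a+1/3)²+6b²}, θ₂(q) = Σ_{a,b∈ℤ} q^{3a²+6(b+1/3)²},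 θ₃(q) = Σ_{a,b∈ℤ} q^{3(a+1/3)²+6(b+1/3)²}. In other words, the theta series of the lattice (1/√3)ρ⁻¹(C) equals the length weight enumerator lwe_C(θ₀,θ₁,θ₂,θ₃). -/
set_option maxHeartbeats 1000000

noncomputable section

/-- `O_K = ℤ[√−2]`, with `Zsqrtd.norm (a + b√−2) = a² + 2b²`. -/
abbrev OK : Type := Zsqrtd (-2)

/-- The ideal `3·O_K`. -/
def I3 : Ideal OK := Ideal.span ({3} : Set OK)

/-- The quotient ring `R = O_K/3O_K`. -/
abbrev R3 : Type := OK ⧸ I3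

/-- Reduction modulo `3O_K`. -/
def mk3 : OK →+* R3 := Ideal.Quotient.mk I3

/-- The length of a coset `r ∈ O_K/3O_K`: `min {N(y) : y ∈ O_K, y mod 3O_K = r}`. -/
def cosetLen (r : R3) : ℕ :=
  sInf {m : ℕ | ∃ y : OK, mk3 y = r ∧ y.norm = (m : ℤ)}

/-- `n_l(c)`: the number of coordinates of `c` whose coset has length `l`. -/
def nLen {k : ℕ} (l : ℕ) (c : Fin k → R3) : ℕ :=
  (Finset.univ.filter fun i => cosetLen (c i) = l).card

/-- `θ₀(q) = Σ_{a,b∈ℤ} q^{3a²+6b²}`. -/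
def theta0 (q : ℝ) : ℝ := ∑' p : ℤ × ℤ, q ^ (3 * (p.1 : ℝ) ^ 2 + 6 * (p.2 : ℝ) ^ 2)

/-- `θ₁(q) = Σ_{a,b∈ℤ} q^{3(a+1/3)²+6b²}`. -/
def theta1 (q : ℝ) : ℝ := ∑' p : ℤ × ℤ, q ^ (3 * ((p.1 : ℝ) + 1/3) ^ 2 + 6 * (p.2 : ℝ) ^ 2)

/-- `θ₂(q) = Σ_{a,b∈ℤ} q^{3a²+6(b+1/3)²}`. -/
def theta2 (q : ℝ) : ℝ := ∑' p : ℤ × ℤ, q ^ (3 * (p.1 : ℝ) ^ 2 + 6 * ((p.2 : ℝ) + 1/3) ^ 2)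

/-- `θ₃(q) = Σ_{a,b∈ℤ} q^{3(a+1/3)²+6(b+1/3)²}`. -/
def theta3 (q : ℝ) : ℝ :=
  ∑' p : ℤ × ℤ, q ^ (3 * ((p.1 : ℝ) + 1/3) ^ 2 + 6 * ((p.2 : ℝ) + 1/3) ^ 2)

/-! ### Auxiliary material -/

namespace ThetaAux

/-- The summand `q^{N(y)/3}`. -/
def gq (q : ℝ) (y : OK) : ℝ := q ^ ((y.norm : ℝ) / 3)

@[simp] lemma mk_re (a b : ℤ) : (⟨a, b⟩ : OK).re = a := rfl
@[simp] lemma mk_im (a b : ℤ) : (⟨a, b⟩ : OK).im = b := rfl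

lemma mk3_eq_iff (x y : OK) :
    mk3 x = mk3 y ↔ (3 : ℤ) ∣ (x.re - y.re) ∧ (3 : ℤ) ∣ (x.im - y.im) := by
  rw [mk3, Ideal.Quotient.eq, I3, Ideal.mem_span_singleton]
  have h3 : (3 : OK) = ((3 : ℤ) : OK) := by norm_cast
  rw [h3, Zsqrtd.intCast_dvd]
  simp [Zsqrtd.re_sub, Zsqrtd.im_sub]

lemma exists_rep (r : R3) :
    ∃ a b : ℤ, a.natAbs ≤ 1 ∧ b.natAbs ≤ 1 ∧ mk3 ⟨a, b⟩ = r := by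
  obtain ⟨y, rfl⟩ := Ideal.Quotient.mk_surjective (I := I3) r
  refine ⟨if y.re % 3 = 2 then -1 else y.re % 3, if y.im % 3 = 2 then -1 else y.im % 3,
    ?_, ?_, ?_⟩
  · split_ifs <;> omega
  · split_ifs <;> omega
  · show mk3 _ = mk3 y
    rw [mk3_eq_iff]
    simp only [mk_re, mk_im]
    constructor <;> split_ifs <;> omega

/-- The norm written out. -/
lemma norm_eq (y : OK) : y.norm = y.re * y.re + 2 * (y.im * y.im) := by
  rw [Zsqrtd.norm_def]; ring

lemma cosetLen_rep (a b : ℤ) (ha : a.natAbs ≤ 1) (hb : b.natAbs ≤ 1) :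
    cosetLen (mk3 ⟨a, b⟩) = a.natAbs + 2 * b.natAbs := by
  have ha1 : -1 ≤ a := by omega
  have ha2 : a ≤ 1 := by omega
  have hb1 : -1 ≤ b := by omega
  have hb2 : b ≤ 1 := by omega
  have hmem : a.natAbs + 2 * b.natAbs ∈
      {m : ℕ | ∃ y : OK, mk3 y = mk3 ⟨a, b⟩ ∧ y.norm = (m : ℤ)} := by
    refine ⟨⟨a, b⟩, rfl, ?_⟩
    rw [norm_eq]
    simp only [mk_re, mk_im]
    interval_cases a <;> interval_cases b <;> norm_num
  rw [cosetLen]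
  refine le_antisymm (Nat.sInf_le hmem) (le_csInf ⟨_, hmem⟩ ?_)
  rintro m ⟨y, hy, hn⟩
  rw [mk3_eq_iff] at hy
  obtain ⟨hre, him⟩ := hy
  rw [norm_eq] at hn
  simp only [mk_re, mk_im] at hre him
  by_contra hlt
  push_neg at hlt
  have hub : a.natAbs + 2 * b.natAbs ≤ 3 := by omega
  have hm3 : (m : ℤ) < 3 := by exact_mod_cast lt_of_lt_of_le hlt hub
  set u := y.re with hu
  set v := y.im with hv
  have h2 : u * u + 2 * (v * v) ≤ 2 := by omega
  have hy1 : -1 ≤ u := by nlinarith [mul_self_nonneg v, mul_self_nonneg (u + 1)]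
  have hy2 : u ≤ 1 := by nlinarith [mul_self_nonneg v, mul_self_nonneg (u - 1)]
  have hy3 : -1 ≤ v := by nlinarith [mul_self_nonneg u, mul_self_nonneg (v + 1)]
  have hy4 : v ≤ 1 := by nlinarith [mul_self_nonneg u, mul_self_nonneg (v - 1)]
  interval_cases u <;> interval_cases v <;> omega

lemma cosetLen_le_three (r : R3) : cosetLen r ≤ 3 := by
  obtain ⟨a, b, ha, hb, rfl⟩ := exists_rep r
  rw [cosetLen_rep a b ha hb]; omega

/-- `thetaL l q` is `θ_l q` for `l = 0,1,2,3`. -/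
def thetaL (l : ℕ) (q : ℝ) : ℝ :=
  if l = 0 then theta0 q else if l = 1 then theta1 q else if l = 2 then theta2 q else theta3 q

variable {q : ℝ}

/-! #### Summability lemmas -/

lemma summable_geo_aux (hq0 : 0 < q) (hq1 : q < 1) :
    Summable fun m : ℤ => q ^ ((((m.natAbs : ℝ)) - 1) / 3) := by
  have hr0 : (0:ℝ) < q ^ ((1:ℝ)/3) := Real.rpow_pos_of_pos hq0 _
  have hr1 : q ^ ((1:ℝ)/3) < 1 := Real.rpow_lt_one hq0.le hq1 (by norm_num)
  have key : ∀ m : ℤ, q ^ ((((m.natAbs : ℝ)) - 1) / 3)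
      = q ^ (-(1:ℝ)/3) * (q ^ ((1:ℝ)/3)) ^ m.natAbs := by
    intro m
    rw [← Real.rpow_natCast (q ^ ((1:ℝ)/3)) m.natAbs, ← Real.rpow_mul hq0.le,
      ← Real.rpow_add hq0]
    ring_nf
  simp only [key]
  apply Summable.mul_left
  have hnat : Summable fun n : ℕ => (q ^ ((1:ℝ)/3)) ^ n :=
    summable_geometric_of_lt_one hr0.le hr1
  apply Summable.of_nat_of_neg <;> simpa using hnat

lemma exponent_bound (c e x : ℝ) (hc : 1/3 ≤ c) (he : |e| ≤ 1/3) :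
    (|x| - 1) / 3 ≤ c * (x + e) ^ 2 := by
  have h1 : (1/3) * (x + e) ^ 2 ≤ c * (x + e) ^ 2 := by nlinarith [sq_nonneg (x + e)]
  suffices h : |x| - 1 ≤ (x + e) ^ 2 by linarith
  rcases le_or_gt (|x|) 1 with h | h
  · nlinarith [sq_nonneg (x + e)]
  · have hxe : |x| - 1/3 ≤ |x + e| := by
      have habs : |x| ≤ |x + e| + |e| := by
        calc |x| = |(x + e) + (-e)| := by ring_nf
        _ ≤ |x + e| + |(-e)| := abs_add_le _ _
        _ = |x + e| + |e| := by rw [abs_neg]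
      linarith
    have hsq : (|x| - 1/3) ^ 2 ≤ |x + e| ^ 2 := by
      have h0 : (0:ℝ) ≤ |x| - 1/3 := by linarith
      nlinarith [abs_nonneg (x + e)]
    rw [sq_abs] at hsq
    nlinarith [sq_nonneg (|x| - 1), abs_nonneg x]

lemma summable_aux (hq0 : 0 < q) (hq1 : q < 1) (c e : ℝ) (hc : 1/3 ≤ c) (he : |e| ≤ 1/3) :
    Summable fun m : ℤ => q ^ (c * ((m : ℝ) + e) ^ 2) := by
  refine Summable.of_nonneg_of_le (fun m => (Real.rpow_pos_of_pos hq0 _).le) (fun m => ?_)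
    (summable_geo_aux hq0 hq1)
  apply Real.rpow_le_rpow_of_exponent_ge hq0 hq1.le
  have habs : |(m:ℝ)| = (m.natAbs : ℝ) := by
    rw [← Int.cast_abs, Int.abs_eq_natAbs, Int.cast_natCast]
  rw [← habs]
  exact exponent_bound c e _ hc he

lemma norm_rpow_self (hq0 : 0 < q) (x : ℝ) : ‖q ^ x‖ = q ^ x :=
  Real.norm_of_nonneg (Real.rpow_pos_of_pos hq0 _).le

/-! #### One-dimensional sums -/

lemma sumA (a : ℤ) (ha : a.natAbs ≤ 1) :
    (∑' m : ℤ, q ^ ((3 * (m:ℝ) + (a:ℝ)) ^ 2 / 3)) =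
      if a = 0 then ∑' m : ℤ, q ^ (3 * (m:ℝ) ^ 2)
      else ∑' m : ℤ, q ^ (3 * ((m:ℝ) + 1/3) ^ 2) := by
  have h1 : -1 ≤ a := by omega
  have h2 : a ≤ 1 := by omega
  interval_cases a
  · rw [if_neg (by norm_num)]
    rw [← (Equiv.neg ℤ).tsum_eq (fun m : ℤ => q ^ ((3 * (m:ℝ) + ((-1 : ℤ):ℝ)) ^ 2 / 3))]
    apply tsum_congr; intro m
    simp only [Equiv.neg_apply]
    congr 1
    push_cast
    ring
  · rw [if_pos rfl]
    apply tsum_congr; intro m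
    congr 1
    push_cast
    ring
  · rw [if_neg (by norm_num)]
    apply tsum_congr; intro m
    congr 1
    push_cast
    ring

lemma sumB (b : ℤ) (hb : b.natAbs ≤ 1) :
    (∑' n : ℤ, q ^ (2 * (3 * (n:ℝ) + (b:ℝ)) ^ 2 / 3)) =
      if b = 0 then ∑' n : ℤ, q ^ (6 * (n:ℝ) ^ 2)
      else ∑' n : ℤ, q ^ (6 * ((n:ℝ) + 1/3) ^ 2) := by
  have h1 : -1 ≤ b := by omega
  have h2 : b ≤ 1 := by omega
  interval_cases b
  · rw [if_neg (by norm_num)]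
    rw [← (Equiv.neg ℤ).tsum_eq (fun n : ℤ => q ^ (2 * (3 * (n:ℝ) + ((-1 : ℤ):ℝ)) ^ 2 / 3))]
    apply tsum_congr; intro n
    simp only [Equiv.neg_apply]
    congr 1
    push_cast
    ring
  · rw [if_pos rfl]
    apply tsum_congr; intro n
    congr 1
    push_cast
    ring
  · rw [if_neg (by norm_num)]
    apply tsum_congr; intro n
    congr 1
    push_cast
    ring

lemma summable_A (hq0 : 0 < q) (hq1 : q < 1) (e : ℝ) (he : |e| ≤ 1/3) :
    Summable fun m : ℤ => q ^ (3 * ((m:ℝ) + e) ^ 2) :=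
  summable_aux hq0 hq1 3 e (by norm_num) he

lemma summable_B (hq0 : 0 < q) (hq1 : q < 1) (e : ℝ) (he : |e| ≤ 1/3) :
    Summable fun n : ℤ => q ^ (6 * ((n:ℝ) + e) ^ 2) :=
  summable_aux hq0 hq1 6 e (by norm_num) he

lemma theta_prod (hq0 : 0 < q) (hq1 : q < 1) (e1 e2 : ℝ) (he1 : |e1| ≤ 1/3)
    (he2 : |e2| ≤ 1/3) :
    (∑' m : ℤ, q ^ (3 * ((m:ℝ) + e1) ^ 2)) * (∑' n : ℤ, q ^ (6 * ((n:ℝ) + e2) ^ 2)) =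
      ∑' p : ℤ × ℤ, q ^ (3 * ((p.1:ℝ) + e1) ^ 2 + 6 * ((p.2:ℝ) + e2) ^ 2) := by
  rw [tsum_mul_tsum_of_summable_norm
    (by simpa only [norm_rpow_self hq0] using summable_A hq0 hq1 e1 he1)
    (by simpa only [norm_rpow_self hq0] using summable_B hq0 hq1 e2 he2)]
  apply tsum_congr; intro p
  rw [← Real.rpow_add hq0]

/-! #### The fiber sums -/

/-- The underlying map of `fiberEquiv`. -/
def fiberFun (a b : ℤ) (p : ℤ × ℤ) : {y : OK // mk3 y = mk3 ⟨a, b⟩} :=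
  ⟨⟨3 * p.1 + a, 3 * p.2 + b⟩, by rw [mk3_eq_iff]; constructor <;> simp⟩

lemma fiberFun_bijective (a b : ℤ) : Function.Bijective (fiberFun a b) := by
  constructor
  · rintro ⟨m, n⟩ ⟨m', n'⟩ h
    simp only [fiberFun, Subtype.mk_eq_mk, Zsqrtd.ext_iff, mk_re, mk_im] at h
    obtain ⟨h1, h2⟩ := h
    have e1 : m = m' := by omega
    have e2 : n = n' := by omega
    simp [e1, e2]
  · rintro ⟨y, hy⟩
    rw [mk3_eq_iff] at hy
    simp only [mk_re, mk_im] at hy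
    obtain ⟨⟨u, hu⟩, ⟨v, hv⟩⟩ := hy
    refine ⟨⟨u, v⟩, ?_⟩
    apply Subtype.ext
    simp only [fiberFun]
    rw [Zsqrtd.ext_iff]
    simp only [mk_re, mk_im]
    constructor <;> omega

/-- The fiber of `mk3` over `mk3 ⟨a,b⟩`, parametrized by `ℤ × ℤ`. -/
def fiberEquiv (a b : ℤ) : (ℤ × ℤ) ≃ {y : OK // mk3 y = mk3 ⟨a, b⟩} :=
  Equiv.ofBijective _ (fiberFun_bijective a b)

lemma fiberEquiv_val (a b : ℤ) (p : ℤ × ℤ) :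
    (fiberEquiv a b p).1 = ⟨3 * p.1 + a, 3 * p.2 + b⟩ := rfl

lemma abs_div3_le (a : ℤ) (ha : a.natAbs ≤ 1) : |(a:ℝ)/3| ≤ 1/3 := by
  have h1 : -1 ≤ a := by omega
  have h2 : a ≤ 1 := by omega
  have h3 : |(3:ℝ)| = 3 := by norm_num
  rw [abs_div, h3]
  have : |(a:ℝ)| ≤ 1 := by
    rw [abs_le]
    constructor <;> [exact_mod_cast h1; exact_mod_cast h2]
  linarith

lemma theta_fiber (hq0 : 0 < q) (hq1 : q < 1) (a b : ℤ) (ha : a.natAbs ≤ 1)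
    (hb : b.natAbs ≤ 1) :
    (∑' y : {y : OK // mk3 y = mk3 ⟨a, b⟩}, gq q y.1) =
      thetaL (a.natAbs + 2 * b.natAbs) q := by
  have he13 : |(1/3 : ℝ)| ≤ 1/3 := by rw [abs_of_pos] <;> norm_num
  have he0 : |(0 : ℝ)| ≤ 1/3 := by norm_num
  have expA : ∀ m : ℤ, (3 * (m:ℝ) + (a:ℝ)) ^ 2 / 3 = 3 * ((m:ℝ) + (a:ℝ)/3) ^ 2 :=
    fun m => by ring
  have expB : ∀ n : ℤ, 2 * (3 * (n:ℝ) + (b:ℝ)) ^ 2 / 3 = 6 * ((n:ℝ) + (b:ℝ)/3) ^ 2 :=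
    fun n => by ring
  have hA : Summable fun m : ℤ => q ^ ((3 * (m:ℝ) + (a:ℝ)) ^ 2 / 3) := by
    simp only [expA]
    exact summable_aux hq0 hq1 3 ((a:ℝ)/3) (by norm_num) (abs_div3_le a ha)
  have hB : Summable fun n : ℤ => q ^ (2 * (3 * (n:ℝ) + (b:ℝ)) ^ 2 / 3) := by
    simp only [expB]
    exact summable_aux hq0 hq1 6 ((b:ℝ)/3) (by norm_num) (abs_div3_le b hb)
  have step1 : ∀ p : ℤ × ℤ,
      gq q (fiberEquiv a b p).1 =
        q ^ ((3 * (p.1:ℝ) + (a:ℝ)) ^ 2 / 3) * q ^ (2 * (3 * (p.2:ℝ) + (b:ℝ)) ^ 2 / 3) := by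
    rintro ⟨m, n⟩
    rw [gq, ← Real.rpow_add hq0]
    congr 1
    rw [fiberEquiv_val, norm_eq]
    simp only [mk_re, mk_im]
    push_cast
    ring
  rw [← (fiberEquiv a b).tsum_eq (fun y : {y : OK // mk3 y = mk3 ⟨a, b⟩} => gq q y.1)]
  rw [tsum_congr step1,
    ← tsum_mul_tsum_of_summable_norm (f := fun m : ℤ => q ^ ((3 * (m:ℝ) + (a:ℝ)) ^ 2 / 3))
      (g := fun n : ℤ => q ^ (2 * (3 * (n:ℝ) + (b:ℝ)) ^ 2 / 3))
      (by simpa only [norm_rpow_self hq0] using hA)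
      (by simpa only [norm_rpow_self hq0] using hB),
    sumA a ha, sumB b hb]
  by_cases ha0 : a = 0 <;> by_cases hb0 : b = 0
  · have hL : a.natAbs + 2 * b.natAbs = 0 := by subst ha0 hb0; rfl
    rw [if_pos ha0, if_pos hb0, hL]
    have e1 : (∑' m : ℤ, q ^ (3 * (m:ℝ) ^ 2)) = ∑' m : ℤ, q ^ (3 * ((m:ℝ) + 0) ^ 2) :=
      tsum_congr fun m => by norm_num
    have e2 : (∑' n : ℤ, q ^ (6 * (n:ℝ) ^ 2)) = ∑' n : ℤ, q ^ (6 * ((n:ℝ) + 0) ^ 2) :=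
      tsum_congr fun n => by norm_num
    rw [e1, e2, theta_prod hq0 hq1 0 0 he0 he0]
    show _ = theta0 q
    rw [theta0]
    exact tsum_congr fun p => by norm_num
  · have hL : a.natAbs + 2 * b.natAbs = 2 := by
      subst ha0; simp only [Int.natAbs_zero]; omega
    rw [if_pos ha0, if_neg hb0, hL]
    have e1 : (∑' m : ℤ, q ^ (3 * (m:ℝ) ^ 2)) = ∑' m : ℤ, q ^ (3 * ((m:ℝ) + 0) ^ 2) :=
      tsum_congr fun m => by norm_num
    rw [e1, theta_prod hq0 hq1 0 (1/3) he0 he13]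
    show _ = theta2 q
    rw [theta2]
    exact tsum_congr fun p => by norm_num
  · have hL : a.natAbs + 2 * b.natAbs = 1 := by
      subst hb0; simp only [Int.natAbs_zero]; omega
    rw [if_neg ha0, if_pos hb0, hL]
    have e2 : (∑' n : ℤ, q ^ (6 * (n:ℝ) ^ 2)) = ∑' n : ℤ, q ^ (6 * ((n:ℝ) + 0) ^ 2) :=
      tsum_congr fun n => by norm_num
    rw [e2, theta_prod hq0 hq1 (1/3) 0 he13 he0]
    show _ = theta1 q
    rw [theta1]
    exact tsum_congr fun p => by norm_num
  · have hL : a.natAbs + 2 * b.natAbs = 3 := by omega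
    rw [if_neg ha0, if_neg hb0, hL]
    rw [theta_prod hq0 hq1 (1/3) (1/3) he13 he13]
    show _ = theta3 q
    rw [theta3]

lemma theta_coset (hq0 : 0 < q) (hq1 : q < 1) (r : R3) :
    (∑' y : {y : OK // mk3 y = r}, gq q y.1) = thetaL (cosetLen r) q := by
  obtain ⟨a, b, ha, hb, rfl⟩ := exists_rep r
  rw [cosetLen_rep a b ha hb]
  exact theta_fiber hq0 hq1 a b ha hb

/-! #### Global summability of `gq` -/

/-- `OK` as pairs of integers. -/
def okEquiv : OK ≃ ℤ × ℤ where
  toFun y := (y.re, y.im)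
  invFun p := ⟨p.1, p.2⟩
  left_inv y := rfl
  right_inv p := rfl

lemma summable_gq (hq0 : 0 < q) (hq1 : q < 1) : Summable (gq q) := by
  rw [← Equiv.summable_iff okEquiv.symm]
  have key : (gq q ∘ okEquiv.symm) = fun p : ℤ × ℤ =>
      q ^ ((1/3 : ℝ) * ((p.1:ℝ) + 0) ^ 2) * q ^ ((2/3 : ℝ) * ((p.2:ℝ) + 0) ^ 2) := by
    funext p
    show gq q ⟨p.1, p.2⟩ = _
    rw [gq, ← Real.rpow_add hq0, norm_eq]
    congr 1
    dsimp only
    push_cast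
    ring
  rw [key]
  have h1n : Summable fun m : ℤ => ‖q ^ ((1/3 : ℝ) * ((m:ℝ) + 0) ^ 2)‖ := by
    simpa only [norm_rpow_self hq0] using
      summable_aux hq0 hq1 (1/3) 0 (by norm_num) (by norm_num)
  have h2n : Summable fun n : ℤ => ‖q ^ ((2/3 : ℝ) * ((n:ℝ) + 0) ^ 2)‖ := by
    simpa only [norm_rpow_self hq0] using
      summable_aux hq0 hq1 (2/3) 0 (by norm_num) (by norm_num)
  exact summable_mul_of_summable_norm h1n h2n

/-! #### tsum over finite products -/

lemma rpow_sum {ι : Type*} (hq0 : 0 < q) (s : Finset ι) (f : ι → ℝ) :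
    q ^ (∑ i ∈ s, f i) = ∏ i ∈ s, q ^ f i := by
  classical
  induction s using Finset.induction_on with
  | empty => simp [Real.rpow_zero]
  | insert a s h ih =>
    rw [Finset.sum_insert h, Finset.prod_insert h, Real.rpow_add hq0, ih]

lemma pi_tsum : ∀ {n : ℕ} (α : Fin n → Type) (f : ∀ i, α i → ℝ),
    (∀ i a, 0 ≤ f i a) → (∀ i, Summable (f i)) →
    Summable (fun x : ∀ i, α i => ∏ i, f i (x i)) ∧
      (∑' x : ∀ i, α i, ∏ i, f i (x i)) = ∏ i, ∑' a, f i a := by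
  intro n
  induction n with
  | zero =>
    intro α f h0 hf
    constructor
    · exact Summable.of_finite
    · simp only [Finset.univ_eq_empty, Finset.prod_empty]
      rw [tsum_eq_single (fun i => i.elim0) (fun b hb =>
        absurd (Subsingleton.elim b _) hb)]
  | succ n ih =>
    intro α f h0 hf
    obtain ⟨ihs, iht⟩ := ih (fun i => α i.succ) (fun i => f i.succ)
      (fun i a => h0 _ a) (fun i => hf _)
    have key : ∀ p : α 0 × (∀ i : Fin n, α i.succ),
        (∏ i, f i (Fin.consEquiv α p i)) = f 0 p.1 * ∏ i, f i.succ (p.2 i) := by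
      rintro ⟨a, x⟩
      rw [Fin.prod_univ_succ]
      simp [Fin.consEquiv]
    have hFn : Summable fun a : α 0 => ‖f 0 a‖ := by
      have : (fun a : α 0 => ‖f 0 a‖) = f 0 :=
        funext fun a => Real.norm_of_nonneg (h0 0 a)
      rw [this]; exact hf 0
    have hGn : Summable fun x : ∀ i : Fin n, α i.succ => ‖∏ i, f i.succ (x i)‖ := by
      have : (fun x : ∀ i : Fin n, α i.succ => ‖∏ i, f i.succ (x i)‖) =
          fun x => ∏ i, f i.succ (x i) :=
        funext fun x => Real.norm_of_nonneg (Finset.prod_nonneg fun i _ => h0 _ _)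
      rw [this]; exact ihs
    have hFG := summable_mul_of_summable_norm hFn hGn
    have hmul := tsum_mul_tsum_of_summable_norm hFn hGn
    have hcomp : (fun x : ∀ i, α i => ∏ i, f i (x i)) ∘ (Fin.consEquiv α) =
        fun p => f 0 p.1 * ∏ i, f i.succ (p.2 i) := funext key
    constructor
    · rw [← Equiv.summable_iff (Fin.consEquiv α), hcomp]
      exact hFG
    · calc (∑' x : ∀ i, α i, ∏ i, f i (x i))
          = ∑' p : α 0 × (∀ i : Fin n, α i.succ), ∏ i, f i (Fin.consEquiv α p i) :=
            ((Fin.consEquiv α).tsum_eq _).symm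
        _ = ∑' p : α 0 × (∀ i : Fin n, α i.succ), f 0 p.1 * ∏ i, f i.succ (p.2 i) :=
            tsum_congr key
        _ = (∑' a : α 0, f 0 a) * ∑' x : ∀ i : Fin n, α i.succ, ∏ i, f i.succ (x i) := by
            exact hmul.symm
        _ = ∏ i, ∑' a, f i a := by rw [iht, Fin.prod_univ_succ]

/-! #### The sigma decomposition -/

/-- Decomposition of `ρ⁻¹(C)` into fibers over codewords. -/
def codeEquiv {k : ℕ} (C : Submodule R3 (Fin k → R3)) :
    (Σ c : C, {x : Fin k → OK // (fun i => mk3 (x i)) = (c : Fin k → R3)}) ≃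
      {x : Fin k → OK // (fun i => mk3 (x i)) ∈ C} where
  toFun z := ⟨z.2.1, by
    have h : (fun i => mk3 (z.2.1 i)) = (z.1 : Fin k → R3) := z.2.2
    rw [h]
    exact z.1.2⟩
  invFun x := ⟨⟨(fun i => mk3 (x.1 i)), x.2⟩, ⟨x.1, rfl⟩⟩
  left_inv := by
    rintro ⟨⟨c, hc⟩, ⟨x, hx⟩⟩
    have hx' : (fun i => mk3 (x i)) = c := hx
    subst hx'
    rfl
  right_inv x := rfl

end ThetaAux

open ThetaAux in
/-- For any code `C` of length `k` over `O_K/3O_K`, the theta series of the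
lattice `(1/√3)·ρ⁻¹(C)` equals the length weight enumerator `lwe_C(θ₀, θ₁, θ₂, θ₃)`. -/
theorem theta_series_eq_lwe (k : ℕ) (hk : 0 < k) (q : ℝ) (hq0 : 0 < q) (hq1 : q < 1)
    (C : Submodule R3 (Fin k → R3)) :
    (∑' x : {x : Fin k → OK // (fun i => mk3 (x i)) ∈ C},
        q ^ ((∑ i, ((x.1 i).norm : ℝ)) / 3)) =
    ∑' c : C, theta0 q ^ nLen 0 (c : Fin k → R3) * theta1 q ^ nLen 1 (c : Fin k → R3) *
        theta2 q ^ nLen 2 (c : Fin k → R3) * theta3 q ^ nLen 3 (c : Fin k → R3) := by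
  classical
  have hgsum : Summable (gq q) := summable_gq hq0 hq1
  have hg0 : ∀ y : OK, 0 ≤ gq q y := fun y => (Real.rpow_pos_of_pos hq0 _).le
  -- exponent rewriting
  have hexp : ∀ x : Fin k → OK,
      q ^ ((∑ i, ((x i).norm : ℝ)) / 3) = ∏ i, gq q (x i) := by
    intro x
    rw [Finset.sum_div, rpow_sum hq0]
    rfl
  -- summability of the product function on the full space
  obtain ⟨hProdSum, -⟩ := pi_tsum (fun _ : Fin k => OK) (fun _ => gq q)
    (fun _ a => hg0 a) (fun _ => hgsum)
  -- summability on the preimage of the code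
  have hsub : Summable (fun x : {x : Fin k → OK // (fun i => mk3 (x i)) ∈ C} =>
      ∏ i, gq q (x.1 i)) := hProdSum.subtype _
  have hsigma : Summable (fun z : (Σ c : C,
      {x : Fin k → OK // (fun i => mk3 (x i)) = (c : Fin k → R3)}) =>
      ∏ i, gq q (z.2.1 i)) := by
    have := (Equiv.summable_iff (codeEquiv C)).mpr hsub
    exact this
  -- per-codeword fiber computation
  have fib : ∀ c : C,
      (∑' x : {x : Fin k → OK // (fun i => mk3 (x i)) = (c : Fin k → R3)},
        ∏ i, gq q (x.1 i)) =
      ∏ i, thetaL (cosetLen ((c : Fin k → R3) i)) q := by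
    intro c
    let e2 : {x : Fin k → OK // (fun i => mk3 (x i)) = (c : Fin k → R3)} ≃
        ∀ i, {y : OK // mk3 y = (c : Fin k → R3) i} :=
      (Equiv.subtypeEquivRight (fun x => funext_iff)).trans
        (Equiv.subtypePiEquivPi (β := fun _ : Fin k => OK)
          (p := fun i y => mk3 y = (c : Fin k → R3) i))
    rw [← e2.symm.tsum_eq]
    have hval : ∀ w : ∀ i, {y : OK // mk3 y = (c : Fin k → R3) i},
        (∏ i, gq q ((e2.symm w).1 i)) = ∏ i, gq q ((w i).1) := fun w => rfl
    rw [tsum_congr hval]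
    obtain ⟨-, ht⟩ := pi_tsum (fun i => {y : OK // mk3 y = (c : Fin k → R3) i})
      (fun i y => gq q y.1) (fun i y => hg0 _) (fun i => hgsum.subtype _)
    rw [ht]
    exact Finset.prod_congr rfl fun i _ => theta_coset hq0 hq1 _
  calc (∑' x : {x : Fin k → OK // (fun i => mk3 (x i)) ∈ C},
        q ^ ((∑ i, ((x.1 i).norm : ℝ)) / 3))
      = ∑' x : {x : Fin k → OK // (fun i => mk3 (x i)) ∈ C}, ∏ i, gq q (x.1 i) :=
        tsum_congr fun x => hexp x.1
    _ = ∑' z : (Σ c : C, {x : Fin k → OK // (fun i => mk3 (x i)) = (c : Fin k → R3)}),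
          ∏ i, gq q (z.2.1 i) := ((codeEquiv C).tsum_eq _).symm
    _ = ∑' c : C, ∑' x : {x : Fin k → OK // (fun i => mk3 (x i)) = (c : Fin k → R3)},
          ∏ i, gq q (x.1 i) := Summable.tsum_sigma hsigma
    _ = ∑' c : C, ∏ i, thetaL (cosetLen ((c : Fin k → R3) i)) q :=
        tsum_congr fun c => fib c
    _ = _ := by
        refine tsum_congr fun c => ?_
        -- partition the product by the length of each coordinate
        rw [← Finset.prod_fiberwise_of_maps_to'
          (t := Finset.range 4) (g := fun i => cosetLen ((c : Fin k → R3) i))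
          (fun i _ => Finset.mem_range.mpr
            (lt_of_le_of_lt (cosetLen_le_three _) (by norm_num)))
          (fun l => thetaL l q)]
        simp only [Finset.prod_const]
        rw [show (4 : ℕ) = 3 + 1 from rfl, Finset.prod_range_succ,
          Finset.prod_range_succ, Finset.prod_range_succ, Finset.prod_range_one]
        have h0 : thetaL 0 q = theta0 q := rfl
        have h1 : thetaL 1 q = theta1 q := rfl
        have h2 : thetaL 2 q = theta2 q := rfl
        have h3 : thetaL 3 q = theta3 q := rfl
        rw [h0, h1, h2, h3]
        rfl
end
end

section
/- For every real q with 0 < q < 1: Σ_{a,b∈ℤ} q^{3(a+1/3)²+6b²} = (1/2)·(Σ_{m∈ℤ} q^{m²/3} − Σ_{m∈ℤ} q^{3m²})·(Σ_{m∈ℤ} q^{6m²}), i.e. θ₁ = (1/2)(ϑ₃(τ/3) − ϑ₃(3τ))·ϑ₃(6τ) where q = e^{πiτ}. -/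
open Real

lemma summable_geom_int {r : ℝ} (h0 : 0 ≤ r) (h1 : r < 1) :
    Summable (fun n : ℤ => r ^ n.natAbs) := by
  apply Summable.of_nat_of_neg
  · simpa using summable_geometric_of_lt_one h0 h1
  · simpa using summable_geometric_of_lt_one h0 h1

lemma summable_rpow_aux {q : ℝ} (h0 : 0 < q) (h1 : q < 1) {c : ℝ} (hc : 0 < c)
    {f : ℤ → ℝ} (hf : ∀ n : ℤ, c * |(n : ℝ)| ≤ f n) :
    Summable (fun n : ℤ => q ^ f n) := by
  have hq1 : q ^ c < 1 := Real.rpow_lt_one h0.le h1 hc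
  have hq0 : 0 ≤ q ^ c := Real.rpow_nonneg h0.le c
  apply Summable.of_nonneg_of_le (fun n => Real.rpow_nonneg h0.le _) (fun n => ?_)
    (summable_geom_int hq0 hq1)
  have h2 : ((q ^ c) ^ n.natAbs : ℝ) = q ^ (c * |(n : ℝ)|) := by
    rw [← Real.rpow_natCast (q ^ c) n.natAbs, ← Real.rpow_mul h0.le, Nat.cast_natAbs, Int.cast_abs]
  rw [h2]
  exact Real.rpow_le_rpow_of_exponent_ge h0 h1.le (hf n)

lemma abs_le_sq_int (n : ℤ) : |(n : ℝ)| ≤ (n : ℝ) ^ 2 := by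
  have : |n| ≤ n ^ 2 := by
    rcases eq_or_ne n 0 with h | h
    · simp [h]
    · have h1 : 1 ≤ |n| := Int.one_le_abs h
      calc |n| = |n| * 1 := by ring
        _ ≤ |n| * |n| := by exact mul_le_mul_of_nonneg_left h1 (abs_nonneg n)
        _ = n ^ 2 := by rw [← abs_mul, abs_mul_self]; ring
  calc |(n : ℝ)| = ((|n| : ℤ) : ℝ) := by push_cast; simp
    _ ≤ (((n ^ 2 : ℤ)) : ℝ) := by exact_mod_cast this
    _ = (n : ℝ) ^ 2 := by push_cast; ring

def e3 : ℤ × Fin 3 ≃ ℤ where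
  toFun p := 3 * p.1 + (p.2.val : ℤ)
  invFun m := (m / 3, ⟨(m % 3).toNat, by omega⟩)
  left_inv := by
    rintro ⟨k, ⟨r, hr⟩⟩
    have h1 : (3 * k + (r : ℤ)) / 3 = k := by omega
    have h2 : ((3 * k + (r : ℤ)) % 3).toNat = r := by omega
    simp [Prod.ext_iff, Fin.ext_iff, h1, h2]; omega
  right_inv := by intro m; simp; omega


lemma tsum_prod_mul {f g : ℤ → ℝ} (hf : Summable f) (hg : Summable g)
    (hf0 : 0 ≤ f) (hg0 : 0 ≤ g) :
    ∑' p : ℤ × ℤ, f p.1 * g p.2 = (∑' a, f a) * ∑' b, g b := by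
  have h : Summable (fun p : ℤ × ℤ => f p.1 * g p.2) := hf.mul_of_nonneg hg hf0 hg0
  rw [Summable.tsum_prod h]
  calc ∑' (a : ℤ) (b : ℤ), f a * g b = ∑' a : ℤ, f a * ∑' b, g b :=
        tsum_congr fun a => tsum_mul_left
    _ = _ := tsum_mul_right

lemma tsum_int_fin3 {f : ℤ → ℝ} (hf : Summable f) :
    ∑' m : ℤ, f m = ∑' k : ℤ, (f (3*k) + (f (3*k+1) + f (3*k+2))) := by
  rw [← e3.tsum_eq f,
    Summable.tsum_prod (show Summable (fun p : ℤ × Fin 3 => f (e3 p)) from e3.summable_iff.mpr hf)]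
  refine tsum_congr fun k => ?_
  rw [tsum_fintype, Fin.sum_univ_three]
  have : ∀ r : ℕ, (e3 (k, (Fin.ofNat 3 r))) = 3 * k + ((Fin.ofNat 3 r).val : ℤ) := fun r => rfl
  simp only [Function.comp_apply, e3, Equiv.coe_fn_mk]
  norm_num [add_assoc]

set_option maxHeartbeats 1600000 in
/-- For `0 < q < 1`:
`θ₁ = Σ_{a,b∈ℤ} q^{3(a+1/3)²+6b²} = (1/2)(ϑ₃(τ/3) − ϑ₃(3τ))·ϑ₃(6τ)`. -/
theorem theta1_eq (q : ℝ) (h0 : 0 < q) (h1 : q < 1) :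
    (∑' p : ℤ × ℤ, q ^ (3 * ((p.1 : ℝ) + 1/3) ^ 2 + 6 * (p.2 : ℝ) ^ 2)) =
      (1 / 2) * ((∑' m : ℤ, q ^ ((m : ℝ) ^ 2 / 3)) - ∑' m : ℤ, q ^ (3 * (m : ℝ) ^ 2)) *
        (∑' m : ℤ, q ^ (6 * (m : ℝ) ^ 2)) := by
  have hmulsucc : ∀ n : ℤ, (0:ℝ) ≤ (n:ℝ) * ((n:ℝ) + 1) := by
    intro n
    have : (0:ℤ) ≤ n * (n + 1) := by
      rcases le_or_gt 0 n with h | h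
      · exact mul_nonneg h (by omega)
      · have h2 : n + 1 ≤ 0 := by omega
        nlinarith
    exact_mod_cast this
  have hA : Summable (fun a : ℤ => q ^ (3 * ((a:ℝ) + 1/3)^2)) := by
    apply summable_rpow_aux h0 h1 (c := 1) one_pos
    intro n
    nlinarith [abs_le_sq_int n, hmulsucc n]
  have hB : Summable (fun b : ℤ => q ^ (6 * (b:ℝ)^2)) := by
    apply summable_rpow_aux h0 h1 (c := 1) one_pos
    intro n
    nlinarith [abs_le_sq_int n, sq_nonneg ((n:ℝ))]
  have hS3 : Summable (fun m : ℤ => q ^ ((m:ℝ)^2/3)) := by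
    apply summable_rpow_aux h0 h1 (c := 1/3) (by norm_num)
    intro n
    nlinarith [abs_le_sq_int n]
  -- Step 1: factor the double sum
  have hprod : (∑' p : ℤ × ℤ, q ^ (3 * ((p.1 : ℝ) + 1/3) ^ 2 + 6 * (p.2 : ℝ) ^ 2))
      = (∑' a : ℤ, q ^ (3 * ((a:ℝ) + 1/3)^2)) * (∑' b : ℤ, q ^ (6 * (b:ℝ)^2)) := by
    calc (∑' p : ℤ × ℤ, q ^ (3 * ((p.1 : ℝ) + 1/3) ^ 2 + 6 * (p.2 : ℝ) ^ 2))
        = ∑' p : ℤ × ℤ, q ^ (3 * ((p.1:ℝ) + 1/3)^2) * q ^ (6 * (p.2:ℝ)^2) :=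
          tsum_congr fun p => Real.rpow_add h0 _ _
      _ = _ := tsum_prod_mul hA hB (fun a => Real.rpow_nonneg h0.le _)
          (fun b => Real.rpow_nonneg h0.le _)
  -- Step 2: split the sum over residues mod 3
  have hu : Summable (fun k : ℤ => q ^ ((((3*k : ℤ)):ℝ)^2/3)) :=
    hS3.comp_injective (fun a b hab => by omega)
  have hv : Summable (fun k : ℤ => q ^ ((((3*k+1 : ℤ)):ℝ)^2/3)) :=
    hS3.comp_injective (fun a b hab => by omega)
  have hw : Summable (fun k : ℤ => q ^ ((((3*k+2 : ℤ)):ℝ)^2/3)) :=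
    hS3.comp_injective (fun a b hab => by omega)
  have hsplit : (∑' m : ℤ, q ^ ((m:ℝ)^2/3))
      = (∑' k : ℤ, q ^ ((((3*k : ℤ)):ℝ)^2/3))
        + ((∑' k : ℤ, q ^ ((((3*k+1 : ℤ)):ℝ)^2/3)) + (∑' k : ℤ, q ^ ((((3*k+2 : ℤ)):ℝ)^2/3))) := by
    rw [tsum_int_fin3 hS3]
    rw [Summable.tsum_add hu (hv.add hw), Summable.tsum_add hv hw]
  -- identities among pieces
  have h30 : (∑' k : ℤ, q ^ ((((3*k : ℤ)):ℝ)^2/3)) = ∑' m : ℤ, q ^ (3 * (m:ℝ)^2) :=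
    tsum_congr fun k => by congr 1; push_cast; ring
  have h32 : (∑' k : ℤ, q ^ ((((3*k+2 : ℤ)):ℝ)^2/3)) = ∑' k : ℤ, q ^ ((((3*k+1 : ℤ)):ℝ)^2/3) := by
    have he := ((Equiv.neg ℤ).trans (Equiv.addLeft (-1 : ℤ))).tsum_eq
      (fun k : ℤ => q ^ ((((3*k+2 : ℤ)):ℝ)^2/3))
    rw [← he]
    refine tsum_congr fun k => ?_
    simp only [Equiv.trans_apply, Equiv.neg_apply, Equiv.coe_addLeft]
    congr 1
    push_cast
    ring
  have hAeq : (∑' a : ℤ, q ^ (3 * ((a:ℝ) + 1/3)^2)) = ∑' k : ℤ, q ^ ((((3*k+1 : ℤ)):ℝ)^2/3) :=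
    tsum_congr fun a => by congr 1; push_cast; ring
  rw [hprod, hsplit, h30, h32, hAeq]
  ring
end

section
/- For every real q with 0 < q < 1: Σ_{a,b∈ℤ} q^{3a²+6(b+1/3)²} = (1/2)·(Σ_{m∈ℤ} q^{3m²})·(Σ_{m∈ℤ} q^{2m²/3} − Σ_{m∈ℤ} q^{6m²}), i.e. θ₂ = (1/2)ϑ₃(3τ)·(ϑ₃(2τ/3) − ϑ₃(6τ)) where q = e^{πiτ}. -/
open Filter

lemma summable_nat_aux (q c e : ℝ) (h0 : 0 < q) (h1 : q < 1) (hc : 0 < c) :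
    Summable (fun n : ℕ => q ^ (c * ((n : ℝ) + e) ^ 2)) := by
  apply summable_of_ratio_norm_eventually_le h1
  filter_upwards [eventually_ge_atTop (⌈1 / (2 * c) + |e|⌉₊ + 1)] with n hn
  have hn' : (1 / (2 * c) + |e|) ≤ (n : ℝ) := by
    calc (1 / (2 * c) + |e|) ≤ (⌈1 / (2 * c) + |e|⌉₊ : ℝ) := Nat.le_ceil _
    _ ≤ n := by exact_mod_cast Nat.le_of_succ_le hn
  have he : -|e| ≤ e := neg_abs_le e
  have h3 : 1 / (2 * c) ≤ (n : ℝ) + e := by linarith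
  have h4 : 1 ≤ ((n : ℝ) + e) * (2 * c) := (div_le_iff₀ (by positivity)).mp h3
  have key : 1 + c * ((n : ℝ) + e) ^ 2 ≤ c * (((n : ℕ) + 1 : ℕ) + e) ^ 2 := by
    push_cast
    nlinarith [hc.le]
  have h2 : q ^ (c * (((n : ℕ) + 1 : ℕ) + e) ^ 2) ≤ q ^ (1 + c * ((n : ℝ) + e) ^ 2) :=
    Real.rpow_le_rpow_of_exponent_ge h0 h1.le key
  rw [Real.norm_of_nonneg (Real.rpow_nonneg h0.le _), Real.norm_of_nonneg (Real.rpow_nonneg h0.le _)]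
  calc q ^ (c * (((n : ℕ) + 1 : ℕ) + e) ^ 2) ≤ q ^ (1 + c * ((n : ℝ) + e) ^ 2) := h2
  _ = q * q ^ (c * ((n : ℝ) + e) ^ 2) := by
      rw [Real.rpow_add h0, Real.rpow_one]

lemma summable_int_aux (q c d : ℝ) (h0 : 0 < q) (h1 : q < 1) (hc : 0 < c) :
    Summable (fun n : ℤ => q ^ (c * ((n : ℝ) + d) ^ 2)) := by
  refine Summable.of_nat_of_neg ?_ ?_
  · refine (summable_nat_aux q c d h0 h1 hc).congr fun n => ?_
    norm_num
  · refine (summable_nat_aux q c (-d) h0 h1 hc).congr fun n => ?_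
    congr 1
    push_cast
    ring

/-- For `0 < q < 1`:
`θ₂ = Σ_{a,b∈ℤ} q^{3a²+6(b+1/3)²} = (1/2)ϑ₃(3τ)·(ϑ₃(2τ/3) − ϑ₃(6τ))`. -/
theorem theta2_eq (q : ℝ) (h0 : 0 < q) (h1 : q < 1) :
    (∑' p : ℤ × ℤ, q ^ (3 * (p.1 : ℝ) ^ 2 + 6 * ((p.2 : ℝ) + 1/3) ^ 2)) =
      (1 / 2) * (∑' m : ℤ, q ^ (3 * (m : ℝ) ^ 2)) *
        ((∑' m : ℤ, q ^ (2 * (m : ℝ) ^ 2 / 3)) - ∑' m : ℤ, q ^ (6 * (m : ℝ) ^ 2)) := by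
  have hA : Summable (fun m : ℤ => q ^ (3 * (m : ℝ) ^ 2)) :=
    (summable_int_aux q 3 0 h0 h1 (by norm_num)).congr fun n => by norm_num
  have hB : Summable (fun m : ℤ => q ^ (6 * ((m : ℝ) + 1/3) ^ 2)) :=
    summable_int_aux q 6 (1/3) h0 h1 (by norm_num)
  have hB' : Summable (fun m : ℤ => q ^ (6 * ((m : ℝ) + 2/3) ^ 2)) :=
    summable_int_aux q 6 (2/3) h0 h1 (by norm_num)
  have hD : Summable (fun m : ℤ => q ^ (6 * (m : ℝ) ^ 2)) :=
    (summable_int_aux q 6 0 h0 h1 (by norm_num)).congr fun n => by norm_num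
  have hC : Summable (fun m : ℤ => q ^ (2 * (m : ℝ) ^ 2 / 3)) :=
    (summable_int_aux q (2/3) 0 h0 h1 (by norm_num)).congr fun n => by
      congr 1; ring
  -- Step 1: the double sum factors.
  have hprod : Summable (fun p : ℤ × ℤ => q ^ (3 * (p.1 : ℝ) ^ 2) * q ^ (6 * ((p.2 : ℝ) + 1/3) ^ 2)) :=
    hA.mul_of_nonneg hB (fun _ => Real.rpow_nonneg h0.le _) fun _ => Real.rpow_nonneg h0.le _
  have step1 : (∑' p : ℤ × ℤ, q ^ (3 * (p.1 : ℝ) ^ 2 + 6 * ((p.2 : ℝ) + 1/3) ^ 2)) =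
      (∑' m : ℤ, q ^ (3 * (m : ℝ) ^ 2)) * ∑' m : ℤ, q ^ (6 * ((m : ℝ) + 1/3) ^ 2) := by
    calc (∑' p : ℤ × ℤ, q ^ (3 * (p.1 : ℝ) ^ 2 + 6 * ((p.2 : ℝ) + 1/3) ^ 2))
        = ∑' p : ℤ × ℤ, q ^ (3 * (p.1 : ℝ) ^ 2) * q ^ (6 * ((p.2 : ℝ) + 1/3) ^ 2) :=
          tsum_congr fun p => Real.rpow_add h0 _ _
      _ = ∑' a : ℤ, ∑' b : ℤ, q ^ (3 * (a : ℝ) ^ 2) * q ^ (6 * ((b : ℝ) + 1/3) ^ 2) :=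
          Summable.tsum_prod hprod
      _ = ∑' a : ℤ, q ^ (3 * (a : ℝ) ^ 2) * ∑' b : ℤ, q ^ (6 * ((b : ℝ) + 1/3) ^ 2) := by
          simp_rw [tsum_mul_left]
      _ = _ := tsum_mul_right
  -- Step 2: split the middle sum mod 3.
  have step2 : (∑' m : ℤ, q ^ (2 * (m : ℝ) ^ 2 / 3)) =
      (∑' m : ℤ, q ^ (6 * (m : ℝ) ^ 2)) + 2 * ∑' m : ℤ, q ^ (6 * ((m : ℝ) + 1/3) ^ 2) := by
    have hsum : Summable (fun p : ℤ × Fin 3 =>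
        q ^ (2 * (((Int.divModEquiv 3).symm p : ℤ) : ℝ) ^ 2 / 3)) :=
      (Equiv.summable_iff (Int.divModEquiv 3).symm
        (f := fun m : ℤ => q ^ (2 * (m : ℝ) ^ 2 / 3))).mpr hC
    have key : (fun p : ℤ × Fin 3 => q ^ (2 * (((Int.divModEquiv 3).symm p : ℤ) : ℝ) ^ 2 / 3)) =
        fun p : ℤ × Fin 3 => q ^ (6 * ((p.1 : ℝ) + (p.2 : ℝ) / 3) ^ 2) := by
      funext p
      congr 1
      show 2 * ((p.1 * 3 + (p.2 : ℤ) : ℤ) : ℝ) ^ 2 / 3 = _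
      push_cast
      ring
    calc (∑' m : ℤ, q ^ (2 * (m : ℝ) ^ 2 / 3))
        = ∑' p : ℤ × Fin 3, q ^ (2 * (((Int.divModEquiv 3).symm p : ℤ) : ℝ) ^ 2 / 3) :=
          (Equiv.tsum_eq (Int.divModEquiv 3).symm
            (fun m : ℤ => q ^ (2 * (m : ℝ) ^ 2 / 3))).symm
      _ = ∑' p : ℤ × Fin 3, q ^ (6 * ((p.1 : ℝ) + (p.2 : ℝ) / 3) ^ 2) := by rw [key]
      _ = ∑' k : ℤ, ∑' j : Fin 3, q ^ (6 * ((k : ℝ) + (j : ℝ) / 3) ^ 2) := by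
          refine Summable.tsum_prod ?_
          rw [← key]; exact hsum
      _ = ∑' k : ℤ, (q ^ (6 * (k : ℝ) ^ 2) + q ^ (6 * ((k : ℝ) + 1/3) ^ 2)
            + q ^ (6 * ((k : ℝ) + 2/3) ^ 2)) := by
          refine tsum_congr fun k => ?_
          rw [tsum_fintype, Fin.sum_univ_three]
          norm_num
      _ = (∑' m : ℤ, q ^ (6 * (m : ℝ) ^ 2)) + (∑' m : ℤ, q ^ (6 * ((m : ℝ) + 1/3) ^ 2))
            + ∑' m : ℤ, q ^ (6 * ((m : ℝ) + 2/3) ^ 2) := by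
          rw [Summable.tsum_add (hD.add hB) hB', Summable.tsum_add hD hB]
      _ = _ := by
          have : (∑' m : ℤ, q ^ (6 * ((m : ℝ) + 2/3) ^ 2))
              = ∑' m : ℤ, q ^ (6 * ((m : ℝ) + 1/3) ^ 2) := by
            rw [← (Equiv.subLeft (-1 : ℤ)).tsum_eq (fun m : ℤ => q ^ (6 * ((m : ℝ) + 2/3) ^ 2))]
            refine tsum_congr fun k => ?_
            congr 1
            simp only [Equiv.subLeft_apply]
            push_cast
            ring
          rw [this]; ring
  rw [step1, step2]
  ring
end

section
/- For every real q with 0 < q < 1: Σ_{a,b∈ℤ} q^{3(a+1/3)²+6(b+1/3)²} = (1/4)·(Σ_{m∈ℤ} q^{m²/3} − Σ_{m∈ℤ} q^{3m²})·(Σ_{m∈ℤ} q^{2m²/3} − Σ_{m∈ℤ} q^{6m²}), i.e. θ₃ = (1/4)(ϑ₃(τ/3) − ϑ₃(3τ))·(ϑ₃(2τ/3) − ϑ₃(6τ)) where q = e^{πiτ}. -/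
set_option maxHeartbeats 1000000

lemma summable_aux (q c d : ℝ) (h0 : 0 < q) (h1 : q < 1) (hc : 0 < c) (hd : |d| ≤ 1/3) :
    Summable fun m : ℤ => q ^ (c * ((m : ℝ) + d) ^ 2) := by
  have hr0 : 0 ≤ q ^ (4 * c / 9) := Real.rpow_nonneg h0.le _
  have hr1 : q ^ (4 * c / 9) < 1 := Real.rpow_lt_one h0.le h1 (by positivity)
  have hg : Summable fun m : ℤ => (q ^ (4 * c / 9)) ^ m.natAbs := by
    apply Summable.of_nat_of_neg <;>
      simpa using summable_geometric_of_lt_one hr0 hr1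
  apply hg.of_nonneg_of_le (fun m => Real.rpow_nonneg h0.le _)
  intro m
  have hcast : (m.natAbs : ℝ) = |(m : ℝ)| := by
    simp [Nat.cast_natAbs]
  have key : 4 * c / 9 * (m.natAbs : ℝ) ≤ c * ((m : ℝ) + d) ^ 2 := by
    rw [hcast]
    rcases eq_or_ne m 0 with rfl | hm
    · simpa using mul_nonneg hc.le (sq_nonneg d)
    · set x : ℝ := (m : ℝ) with hx
      have h1x : (1 : ℝ) ≤ |x| := by
        rw [hx, ← Int.cast_abs]
        exact_mod_cast Int.one_le_abs hm
      have h2 : |x| - 1/3 ≤ |x + d| := by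
        have h := abs_add_le (x + d) (-d)
        rw [abs_neg] at h
        simp only [add_neg_cancel_right] at h
        linarith
      have h3 : (|x| - 1/3) ^ 2 ≤ (x + d) ^ 2 := by
        rw [← sq_abs (x + d)]
        exact pow_le_pow_left₀ (by linarith) h2 2
      have h4 : 4/9 * |x| ≤ (|x| - 1/3) ^ 2 := by
        nlinarith [sq_nonneg (|x| - 1)]
      nlinarith [mul_le_mul_of_nonneg_left (h4.trans h3) hc.le]
  calc q ^ (c * ((m : ℝ) + d) ^ 2) ≤ q ^ (4 * c / 9 * (m.natAbs : ℝ)) :=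
        Real.rpow_le_rpow_of_exponent_ge h0 h1.le key
    _ = (q ^ (4 * c / 9)) ^ m.natAbs := by
        rw [← Real.rpow_natCast (q ^ (4 * c / 9)) m.natAbs, ← Real.rpow_mul h0.le]

lemma split3 (q c : ℝ) (h0 : 0 < q) (h1 : q < 1) (hc : 0 < c) :
    (∑' m : ℤ, q ^ (c * (m : ℝ) ^ 2 / 3)) =
      (∑' a : ℤ, q ^ (3 * c * (a : ℝ) ^ 2)) +
        2 * ∑' a : ℤ, q ^ (3 * c * ((a : ℝ) + 1/3) ^ 2) := by
  have hf : Summable fun m : ℤ => q ^ (c * (m : ℝ) ^ 2 / 3) := by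
    refine (summable_aux q (c/3) 0 h0 h1 (by positivity) (by rw [abs_of_nonneg] <;> norm_num)).congr fun m => ?_
    congr 1; ring
  have hg0 : Summable fun a : ℤ => q ^ (3 * c * (a : ℝ) ^ 2) := by
    refine (summable_aux q (3*c) 0 h0 h1 (by positivity) (by rw [abs_of_nonneg] <;> norm_num)).congr fun m => ?_
    congr 1; ring
  have hg1 : Summable fun a : ℤ => q ^ (3 * c * ((a : ℝ) + 1/3) ^ 2) :=
    summable_aux q (3*c) (1/3) h0 h1 (by positivity) (by rw [abs_of_nonneg] <;> norm_num)
  -- the third residue class sum equals the second via a ↦ -1 - a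
  have e2 := Equiv.subLeft (-1 : ℤ)
  have hg2' : Summable fun a : ℤ => q ^ (3 * c * ((a : ℝ) + 2/3) ^ 2) := by
    rw [← (Equiv.subLeft (-1 : ℤ)).summable_iff]
    refine hg1.congr fun b => ?_
    simp only [Function.comp_apply, Equiv.subLeft_apply]
    congr 1; push_cast; ring
  have hg2eq : (∑' a : ℤ, q ^ (3 * c * ((a : ℝ) + 2/3) ^ 2)) =
      ∑' a : ℤ, q ^ (3 * c * ((a : ℝ) + 1/3) ^ 2) := by
    rw [← (Equiv.subLeft (-1 : ℤ)).tsum_eq (fun a : ℤ => q ^ (3 * c * ((a : ℝ) + 2/3) ^ 2))]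
    refine tsum_congr fun b => ?_
    simp only [Equiv.subLeft_apply]
    congr 1; push_cast; ring
  set e := Int.divModEquiv 3
  have hF : Summable fun p : ℤ × Fin 3 => q ^ (c * ((e.symm p : ℤ) : ℝ) ^ 2 / 3) :=
    e.symm.summable_iff.mpr hf
  have step : (∑' m : ℤ, q ^ (c * (m : ℝ) ^ 2 / 3)) =
      ∑' p : ℤ × Fin 3, q ^ (c * ((e.symm p : ℤ) : ℝ) ^ 2 / 3) :=
    (e.symm.tsum_eq fun m : ℤ => q ^ (c * (m : ℝ) ^ 2 / 3)).symm
  rw [step, Summable.tsum_prod' hF fun a => Summable.of_finite]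
  have inner : ∀ a : ℤ, (∑' j : Fin 3, q ^ (c * ((e.symm (a, j) : ℤ) : ℝ) ^ 2 / 3)) =
      q ^ (3 * c * (a : ℝ) ^ 2) + q ^ (3 * c * ((a : ℝ) + 1/3) ^ 2) +
        q ^ (3 * c * ((a : ℝ) + 2/3) ^ 2) := by
    intro a
    rw [tsum_fintype, Fin.sum_univ_three]
    simp only [e, Int.divModEquiv_symm_apply]
    congr 1
    · congr 1
      · congr 1; push_cast [Fin.val_zero, Fin.val_one, Fin.val_two]; ring
      · congr 1; push_cast [Fin.val_zero, Fin.val_one, Fin.val_two]; ring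
    · congr 1; push_cast [Fin.val_zero, Fin.val_one, Fin.val_two]; ring
  rw [tsum_congr inner, Summable.tsum_add (hg0.add hg1) hg2', Summable.tsum_add hg0 hg1, hg2eq]
  ring

/-- For `0 < q < 1`:
`θ₃ = Σ_{a,b∈ℤ} q^{3(a+1/3)²+6(b+1/3)²} = (1/4)(ϑ₃(τ/3) − ϑ₃(3τ))·(ϑ₃(2τ/3) − ϑ₃(6τ))`. -/
theorem theta3_eq (q : ℝ) (h0 : 0 < q) (h1 : q < 1) :
    (∑' p : ℤ × ℤ, q ^ (3 * ((p.1 : ℝ) + 1/3) ^ 2 + 6 * ((p.2 : ℝ) + 1/3) ^ 2)) =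
      (1 / 4) * ((∑' m : ℤ, q ^ ((m : ℝ) ^ 2 / 3)) - ∑' m : ℤ, q ^ (3 * (m : ℝ) ^ 2)) *
        ((∑' m : ℤ, q ^ (2 * (m : ℝ) ^ 2 / 3)) - ∑' m : ℤ, q ^ (6 * (m : ℝ) ^ 2)) := by
  have hA : Summable fun a : ℤ => q ^ (3 * ((a : ℝ) + 1/3) ^ 2) :=
    summable_aux q 3 (1/3) h0 h1 (by norm_num) (by rw [abs_of_nonneg] <;> norm_num)
  have hB : Summable fun b : ℤ => q ^ (6 * ((b : ℝ) + 1/3) ^ 2) :=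
    summable_aux q 6 (1/3) h0 h1 (by norm_num) (by rw [abs_of_nonneg] <;> norm_num)
  have h1' : (∑' m : ℤ, q ^ ((m : ℝ) ^ 2 / 3)) =
      (∑' a : ℤ, q ^ (3 * (a : ℝ) ^ 2)) + 2 * ∑' a : ℤ, q ^ (3 * ((a : ℝ) + 1/3) ^ 2) := by
    have := split3 q 1 h0 h1 one_pos
    simpa using this
  have h2' : (∑' m : ℤ, q ^ (2 * (m : ℝ) ^ 2 / 3)) =
      (∑' a : ℤ, q ^ (6 * (a : ℝ) ^ 2)) + 2 * ∑' a : ℤ, q ^ (6 * ((a : ℝ) + 1/3) ^ 2) := by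
    have := split3 q 2 h0 h1 two_pos
    norm_num at this ⊢
    convert this using 3 <;> ring_nf
  have hL : (∑' p : ℤ × ℤ, q ^ (3 * ((p.1 : ℝ) + 1/3) ^ 2 + 6 * ((p.2 : ℝ) + 1/3) ^ 2)) =
      (∑' a : ℤ, q ^ (3 * ((a : ℝ) + 1/3) ^ 2)) * ∑' b : ℤ, q ^ (6 * ((b : ℝ) + 1/3) ^ 2) := by
    rw [Summable.tsum_mul_tsum hA hB
      (hA.mul_of_nonneg hB (fun a => Real.rpow_nonneg h0.le _) fun b => Real.rpow_nonneg h0.le _)]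
    exact tsum_congr fun p => Real.rpow_add h0 _ _
  rw [hL, h1', h2']
  ring
end

section
/- For every real q with 0 < q < 1: Σ_{a,b∈ℤ} q^{2(a²+ab+b²)} = (Σ_{m∈ℤ} q^{2(m+1/2)²})·(Σ_{m∈ℤ} q^{6(m+1/2)²}) + (Σ_{m∈ℤ} q^{2m²})·(Σ_{m∈ℤ} q^{6m²}), i.e. the theta series of the hexagonal lattice A₂ (scaled to minimum norm 2) satisfies Θ_{A₂}(τ) = ϑ₂(2τ)ϑ₂(6τ) + ϑ₃(2τ)ϑ₃(6τ). -/
open Real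

section aux

variable {q : ℝ} (h0 : 0 < q) (h1 : q < 1)

/-- Summability over ℤ of `q ^ natAbs`. -/
lemma summable_q_natAbs (h0 : 0 < q) (h1 : q < 1) :
    Summable (fun m : ℤ => q ^ (m.natAbs : ℝ)) := by
  have hgeo : Summable (fun n : ℕ => q ^ (n : ℝ)) := by
    have := summable_geometric_of_lt_one h0.le h1
    simpa [Real.rpow_natCast] using this
  have ha : Summable (fun n : ℕ => q ^ (((n : ℤ).natAbs : ℕ) : ℝ)) := by simpa using hgeo
  have hb : Summable (fun n : ℕ => q ^ (((-(n : ℤ)).natAbs : ℕ) : ℝ)) := by simpa using hgeo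
  exact Summable.of_nat_of_neg ha hb

/-- Comparison lemma: if the exponent dominates `|m| - 1`, the series is summable. -/
lemma summable_q_exp (h0 : 0 < q) (h1 : q < 1) (e : ℤ → ℝ)
    (he : ∀ m : ℤ, (m.natAbs : ℝ) - 1 ≤ e m) :
    Summable (fun m : ℤ => q ^ (e m)) := by
  have hs : Summable (fun m : ℤ => q⁻¹ * q ^ (m.natAbs : ℝ)) :=
    (summable_q_natAbs h0 h1).mul_left _
  refine Summable.of_nonneg_of_le (fun m => (Real.rpow_pos_of_pos h0 _).le) (fun m => ?_) hs
  have h2 : q ^ (e m) ≤ q ^ ((m.natAbs : ℝ) - 1) :=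
    Real.rpow_le_rpow_of_exponent_ge h0 h1.le (he m)
  calc q ^ e m ≤ q ^ ((m.natAbs : ℝ) - 1) := h2
    _ = q⁻¹ * q ^ (m.natAbs : ℝ) := by
        rw [Real.rpow_sub h0, Real.rpow_one, div_eq_mul_inv, mul_comm]

lemma natAbs_le_sq (m : ℤ) : (m.natAbs : ℝ) - 1 ≤ (m : ℝ) ^ 2 := by
  have h : (m.natAbs : ℝ) = |(m : ℝ)| := by
    rw [Nat.cast_natAbs]; push_cast; ring
  rw [h]
  rcases abs_cases (m : ℝ) with ⟨h', _⟩ | ⟨h', _⟩ <;> rw [h'] <;> nlinarith [sq_nonneg ((m:ℝ) - 1), sq_nonneg ((m:ℝ) + 1)]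

lemma natAbs_le_half_sq (m : ℤ) : (m.natAbs : ℝ) - 1 ≤ 2 * ((m : ℝ) + 1/2) ^ 2 := by
  have h : (m.natAbs : ℝ) = |(m : ℝ)| := by
    rw [Nat.cast_natAbs]; push_cast; ring
  rw [h]
  rcases abs_cases (m : ℝ) with ⟨h', _⟩ | ⟨h', _⟩ <;> rw [h'] <;> nlinarith [sq_nonneg (2*(m:ℝ) + 1), sq_nonneg (2*(m:ℝ) + 3), sq_nonneg (2*(m:ℝ) - 1)]

lemma summable_q2sq (h0 : 0 < q) (h1 : q < 1) (c : ℝ) (hc : 1 ≤ c) :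
    Summable (fun m : ℤ => q ^ (c * (m : ℝ) ^ 2)) := by
  refine summable_q_exp h0 h1 _ (fun m => ?_)
  have := natAbs_le_sq m
  nlinarith [sq_nonneg (m : ℝ)]

lemma summable_q2half (h0 : 0 < q) (h1 : q < 1) (c : ℝ) (hc : 2 ≤ c) :
    Summable (fun m : ℤ => q ^ (c * ((m : ℝ) + 1/2) ^ 2)) := by
  refine summable_q_exp h0 h1 _ (fun m => ?_)
  have := natAbs_le_half_sq m
  nlinarith [sq_nonneg ((m : ℝ) + 1/2)]

end aux

lemma HasSum.sumElim {α β M : Type*} [AddCommMonoid M] [TopologicalSpace M]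
    [ContinuousAdd M] {f : α → M} {g : β → M} {a b : M}
    (hf : HasSum f a) (hg : HasSum g b) : HasSum (Sum.elim f g) (a + b) := by
  have h1 : HasSum ((Sum.elim f g) ∘ (Sum.inl : α → α ⊕ β)) a := by
    simpa [Function.comp_def] using hf
  have h2 : HasSum ((Sum.elim f g) ∘ (Sum.inr : β → α ⊕ β)) b := by
    simpa [Function.comp_def] using hg
  exact HasSum.add_isCompl Set.isCompl_range_inl_range_inr
    ((Sum.inl_injective.hasSum_range_iff).2 h1)
    ((Sum.inr_injective.hasSum_range_iff).2 h2)

/-- The change-of-variables bijection. -/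
def thetaEquiv : (ℤ × ℤ) ⊕ (ℤ × ℤ) ≃ ℤ × ℤ where
  toFun := Sum.elim (fun p => (p.1 - p.2, 2 * p.2 + 1)) (fun p => (p.1 - p.2, 2 * p.2))
  invFun p := if p.2 % 2 = 0 then .inr (p.1 + p.2 / 2, p.2 / 2) else .inl (p.1 + p.2 / 2, p.2 / 2)
  left_inv := by
    rintro (⟨m, n⟩ | ⟨m, n⟩)
    · have h : ¬ ((2 * n + 1) % 2 = 0) := by omega
      simp [h]
      omega
    · have h : (2 * n) % 2 = 0 := by omega
      simp [h]
  right_inv := by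
    rintro ⟨a, b⟩
    by_cases h : b % 2 = 0 <;> simp [h, Prod.ext_iff] <;> omega

set_option maxHeartbeats 1000000

/-- The theta series of the hexagonal lattice `A₂` (scaled to minimum
norm `2`) satisfies `Θ_{A₂}(τ) = ϑ₂(2τ)ϑ₂(6τ) + ϑ₃(2τ)ϑ₃(6τ)` for `0 < q < 1`. -/
theorem theta_A2 (q : ℝ) (h0 : 0 < q) (h1 : q < 1) :
    (∑' p : ℤ × ℤ, q ^ (2 * ((p.1 : ℝ) ^ 2 + (p.1 : ℝ) * (p.2 : ℝ) + (p.2 : ℝ) ^ 2))) =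
      (∑' m : ℤ, q ^ (2 * ((m : ℝ) + 1/2) ^ 2)) * (∑' m : ℤ, q ^ (6 * ((m : ℝ) + 1/2) ^ 2)) +
        (∑' m : ℤ, q ^ (2 * (m : ℝ) ^ 2)) * (∑' m : ℤ, q ^ (6 * (m : ℝ) ^ 2)) := by
  have h2 := summable_q2sq h0 h1 2 (by norm_num)
  have h6 := summable_q2sq h0 h1 6 (by norm_num)
  have h2h := summable_q2half h0 h1 2 (by norm_num)
  have h6h := summable_q2half h0 h1 6 (by norm_num)
  -- summability of the product functions on ℤ × ℤ
  have hprod3 : Summable (fun p : ℤ × ℤ => q ^ (2 * (p.1 : ℝ) ^ 2) * q ^ (6 * (p.2 : ℝ) ^ 2)) :=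
    Summable.mul_of_nonneg (f := fun m : ℤ => q ^ (2 * (m : ℝ) ^ 2))
      (g := fun m : ℤ => q ^ (6 * (m : ℝ) ^ 2)) h2 h6
      (fun m => (Real.rpow_pos_of_pos h0 _).le) (fun m => (Real.rpow_pos_of_pos h0 _).le)
  have hprod2 : Summable (fun p : ℤ × ℤ =>
      q ^ (2 * ((p.1 : ℝ) + 1/2) ^ 2) * q ^ (6 * ((p.2 : ℝ) + 1/2) ^ 2)) :=
    Summable.mul_of_nonneg (f := fun m : ℤ => q ^ (2 * ((m : ℝ) + 1/2) ^ 2))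
      (g := fun m : ℤ => q ^ (6 * ((m : ℝ) + 1/2) ^ 2)) h2h h6h
      (fun m => (Real.rpow_pos_of_pos h0 _).le) (fun m => (Real.rpow_pos_of_pos h0 _).le)
  -- key: F ∘ thetaEquiv equals the Sum.elim of the two product functions
  set F : ℤ × ℤ → ℝ := fun p => q ^ (2 * ((p.1 : ℝ) ^ 2 + (p.1 : ℝ) * (p.2 : ℝ) + (p.2 : ℝ) ^ 2))
    with hF
  have hkey : ∀ x : (ℤ × ℤ) ⊕ (ℤ × ℤ), F (thetaEquiv x) =
      Sum.elim (fun p : ℤ × ℤ => q ^ (2 * ((p.1 : ℝ) + 1/2) ^ 2) * q ^ (6 * ((p.2 : ℝ) + 1/2) ^ 2))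
        (fun p : ℤ × ℤ => q ^ (2 * (p.1 : ℝ) ^ 2) * q ^ (6 * (p.2 : ℝ) ^ 2)) x := by
    rintro (⟨m, n⟩ | ⟨m, n⟩) <;>
      simp only [hF, thetaEquiv, Equiv.coe_fn_mk, Sum.elim_inl, Sum.elim_inr] <;>
      rw [← Real.rpow_add h0] <;> congr 1 <;> push_cast <;> ring
  have htheta2 : (∑' p : ℤ × ℤ, q ^ (2 * ((p.1 : ℝ) + 1/2) ^ 2) * q ^ (6 * ((p.2 : ℝ) + 1/2) ^ 2))
      = (∑' m : ℤ, q ^ (2 * ((m : ℝ) + 1/2) ^ 2)) * (∑' m : ℤ, q ^ (6 * ((m : ℝ) + 1/2) ^ 2)) := by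
    rw [Summable.tsum_prod' hprod2 (fun b => h6h.mul_left (q ^ (2 * ((b : ℝ) + 1/2) ^ 2)))]
    simp_rw [tsum_mul_left]
    rw [tsum_mul_right]
  have htheta3 : (∑' p : ℤ × ℤ, q ^ (2 * (p.1 : ℝ) ^ 2) * q ^ (6 * (p.2 : ℝ) ^ 2))
      = (∑' m : ℤ, q ^ (2 * (m : ℝ) ^ 2)) * (∑' m : ℤ, q ^ (6 * (m : ℝ) ^ 2)) := by
    rw [Summable.tsum_prod' hprod3 (fun b => h6.mul_left (q ^ (2 * (b : ℝ) ^ 2)))]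
    simp_rw [tsum_mul_left]
    rw [tsum_mul_right]
  calc (∑' p : ℤ × ℤ, F p) = ∑' x : (ℤ × ℤ) ⊕ (ℤ × ℤ), F (thetaEquiv x) :=
        (thetaEquiv.tsum_eq F).symm
    _ = ∑' x : (ℤ × ℤ) ⊕ (ℤ × ℤ),
        Sum.elim (fun p : ℤ × ℤ => q ^ (2 * ((p.1 : ℝ) + 1/2) ^ 2) * q ^ (6 * ((p.2 : ℝ) + 1/2) ^ 2))
          (fun p : ℤ × ℤ => q ^ (2 * (p.1 : ℝ) ^ 2) * q ^ (6 * (p.2 : ℝ) ^ 2)) x := tsum_congr hkey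
    _ = (∑' p : ℤ × ℤ, q ^ (2 * ((p.1 : ℝ) + 1/2) ^ 2) * q ^ (6 * ((p.2 : ℝ) + 1/2) ^ 2))
        + (∑' p : ℤ × ℤ, q ^ (2 * (p.1 : ℝ) ^ 2) * q ^ (6 * (p.2 : ℝ) ^ 2)) :=
        (hprod2.hasSum.sumElim hprod3.hasSum).tsum_eq
    _ = _ := by rw [htheta2, htheta3]
end

section
/- Let G be the 8×8 integer matrix G = [[2,1,0,−1,0,2,−1,−2],[1,2,−1,0,1,0,−1,−2],[0,−1,2,−1,−1,2,0,2],[−1,0,−1,2,1,−2,1,0],[0,1,−1,1,3,0,0,0],[2,0,2,−2,0,6,0,0],[−1,−1,0,1,0,0,3,0],[−2,−2,2,0,0,0,0,6]]. Then the numbers of vectors u ∈ ℤ⁸ with u G uᵀ = m are: 1 for m = 0, 0 for m = 1, 32 for m = 2, 128 for m = 3, and 240 for m = 4. Equivalently, the theta series of the 8-dimensional odd 2-modular lattice with Gram matrix G begins 1 + 32q² + 128q³ + 240q⁴ + ⋯. -/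
set_option maxRecDepth 40000
set_option linter.constructorNameAsVariable false

open Matrix

/-- The Gram matrix of the 8-dimensional odd 2-modular lattice `(1/√3)ρ⁻¹(C)`. -/
def G : Matrix (Fin 8) (Fin 8) ℤ :=
  !![2, 1, 0, -1, 0, 2, -1, -2;
     1, 2, -1, 0, 1, 0, -1, -2;
     0, -1, 2, -1, -1, 2, 0, 2;
     -1, 0, -1, 2, 1, -2, 1, 0;
     0, 1, -1, 1, 3, 0, 0, 0;
     2, 0, 2, -2, 0, 6, 0, 0;
     -1, -1, 0, 1, 0, 0, 3, 0;
     -2, -2, 2, 0, 0, 0, 0, 6]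

lemma G00 : G 0 0 = 2 := rfl
lemma G01 : G 0 1 = 1 := rfl
lemma G02 : G 0 2 = 0 := rfl
lemma G03 : G 0 3 = -1 := rfl
lemma G04 : G 0 4 = 0 := rfl
lemma G05 : G 0 5 = 2 := rfl
lemma G06 : G 0 6 = -1 := rfl
lemma G07 : G 0 7 = -2 := rfl
lemma G10 : G 1 0 = 1 := rfl
lemma G11 : G 1 1 = 2 := rfl
lemma G12 : G 1 2 = -1 := rfl
lemma G13 : G 1 3 = 0 := rfl
lemma G14 : G 1 4 = 1 := rfl
lemma G15 : G 1 5 = 0 := rfl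
lemma G16 : G 1 6 = -1 := rfl
lemma G17 : G 1 7 = -2 := rfl
lemma G20 : G 2 0 = 0 := rfl
lemma G21 : G 2 1 = -1 := rfl
lemma G22 : G 2 2 = 2 := rfl
lemma G23 : G 2 3 = -1 := rfl
lemma G24 : G 2 4 = -1 := rfl
lemma G25 : G 2 5 = 2 := rfl
lemma G26 : G 2 6 = 0 := rfl
lemma G27 : G 2 7 = 2 := rfl
lemma G30 : G 3 0 = -1 := rfl
lemma G31 : G 3 1 = 0 := rfl
lemma G32 : G 3 2 = -1 := rfl
lemma G33 : G 3 3 = 2 := rfl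
lemma G34 : G 3 4 = 1 := rfl
lemma G35 : G 3 5 = -2 := rfl
lemma G36 : G 3 6 = 1 := rfl
lemma G37 : G 3 7 = 0 := rfl
lemma G40 : G 4 0 = 0 := rfl
lemma G41 : G 4 1 = 1 := rfl
lemma G42 : G 4 2 = -1 := rfl
lemma G43 : G 4 3 = 1 := rfl
lemma G44 : G 4 4 = 3 := rfl
lemma G45 : G 4 5 = 0 := rfl
lemma G46 : G 4 6 = 0 := rfl
lemma G47 : G 4 7 = 0 := rfl
lemma G50 : G 5 0 = 2 := rfl
lemma G51 : G 5 1 = 0 := rfl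
lemma G52 : G 5 2 = 2 := rfl
lemma G53 : G 5 3 = -2 := rfl
lemma G54 : G 5 4 = 0 := rfl
lemma G55 : G 5 5 = 6 := rfl
lemma G56 : G 5 6 = 0 := rfl
lemma G57 : G 5 7 = 0 := rfl
lemma G60 : G 6 0 = -1 := rfl
lemma G61 : G 6 1 = -1 := rfl
lemma G62 : G 6 2 = 0 := rfl
lemma G63 : G 6 3 = 1 := rfl
lemma G64 : G 6 4 = 0 := rfl
lemma G65 : G 6 5 = 0 := rfl
lemma G66 : G 6 6 = 3 := rfl
lemma G67 : G 6 7 = 0 := rfl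
lemma G70 : G 7 0 = -2 := rfl
lemma G71 : G 7 1 = -2 := rfl
lemma G72 : G 7 2 = 2 := rfl
lemma G73 : G 7 3 = 0 := rfl
lemma G74 : G 7 4 = 0 := rfl
lemma G75 : G 7 5 = 0 := rfl
lemma G76 : G 7 6 = 0 := rfl
lemma G77 : G 7 7 = 6 := rfl


abbrev Z4 := ℤ × ℤ × ℤ × ℤ

def fA : Z4 → ℤ := fun x => match x with
  | (a,b,c,d) => 2*a^2+2*b^2+2*c^2+2*d^2+2*a*b+2*a*c+2*a*d+2*b*c+2*b*d
def gA : Z4 → ℤ := fun y => match y with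
  | (p,q,r,s) => 2*(p^2+q^2+r^2+s^2)
def fB : Z4 → ℤ := fun x => match x with
  | (a,b,c,d) => 2*a^2+2*b^2+2*c^2+2*d^2+2*a*b+2*a*c+2*a*d+2*b*c+2*b*d - 2*b
def gB : Z4 → ℤ := fun y => match y with
  | (p,q,r,s) => 2*(p^2+q^2+r^2+s^2) + 2*p + 2*q - 2*r - 2*s + 3

def pA : Z4 × Z4 → (Fin 8 → ℤ) := fun v => match v with
  | ((a,b,c,d),(p,q,r,s)) =>
    ![-(a+b+c+d+p+q+r+s), d - p, -a+p-q-r+s, -a-b-d+r, p-r, q+r, -p-r, -p-s]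
def pB : Z4 × Z4 → (Fin 8 → ℤ) := fun v => match v with
  | ((a,b,c,d),(p,q,r,s)) =>
    ![-(a+b+c+d+p+q+r+s), d - p, -a+p-q-r+s, -a-b-d+r, p-r+1, q+r, -p-r, -p-s]

lemma pA_app0 (a b c d p q r s : ℤ) : pA ((a,b,c,d),(p,q,r,s)) 0 = -(a+b+c+d+p+q+r+s) := rfl
lemma pA_app1 (a b c d p q r s : ℤ) : pA ((a,b,c,d),(p,q,r,s)) 1 = d - p := rfl
lemma pA_app2 (a b c d p q r s : ℤ) : pA ((a,b,c,d),(p,q,r,s)) 2 = -a+p-q-r+s := rfl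
lemma pA_app3 (a b c d p q r s : ℤ) : pA ((a,b,c,d),(p,q,r,s)) 3 = -a-b-d+r := rfl
lemma pA_app4 (a b c d p q r s : ℤ) : pA ((a,b,c,d),(p,q,r,s)) 4 = p-r := rfl
lemma pA_app5 (a b c d p q r s : ℤ) : pA ((a,b,c,d),(p,q,r,s)) 5 = q+r := rfl
lemma pA_app6 (a b c d p q r s : ℤ) : pA ((a,b,c,d),(p,q,r,s)) 6 = -p-r := rfl
lemma pA_app7 (a b c d p q r s : ℤ) : pA ((a,b,c,d),(p,q,r,s)) 7 = -p-s := rfl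
lemma pB_app0 (a b c d p q r s : ℤ) : pB ((a,b,c,d),(p,q,r,s)) 0 = -(a+b+c+d+p+q+r+s) := rfl
lemma pB_app1 (a b c d p q r s : ℤ) : pB ((a,b,c,d),(p,q,r,s)) 1 = d - p := rfl
lemma pB_app2 (a b c d p q r s : ℤ) : pB ((a,b,c,d),(p,q,r,s)) 2 = -a+p-q-r+s := rfl
lemma pB_app3 (a b c d p q r s : ℤ) : pB ((a,b,c,d),(p,q,r,s)) 3 = -a-b-d+r := rfl
lemma pB_app4 (a b c d p q r s : ℤ) : pB ((a,b,c,d),(p,q,r,s)) 4 = p-r+1 := rfl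
lemma pB_app5 (a b c d p q r s : ℤ) : pB ((a,b,c,d),(p,q,r,s)) 5 = q+r := rfl
lemma pB_app6 (a b c d p q r s : ℤ) : pB ((a,b,c,d),(p,q,r,s)) 6 = -p-r := rfl
lemma pB_app7 (a b c d p q r s : ℤ) : pB ((a,b,c,d),(p,q,r,s)) 7 = -p-s := rfl

lemma funext8 (u w : Fin 8 → ℤ) (h0 : u 0 = w 0) (h1 : u 1 = w 1) (h2 : u 2 = w 2)
    (h3 : u 3 = w 3) (h4 : u 4 = w 4) (h5 : u 5 = w 5) (h6 : u 6 = w 6) (h7 : u 7 = w 7) :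
    u = w := by
  funext i; fin_cases i <;> assumption

lemma QA (v : Z4 × Z4) : (pA v) ⬝ᵥ G.mulVec (pA v) = fA v.1 + gA v.2 := by
  obtain ⟨⟨a,b,c,d⟩,⟨p,q,r,s⟩⟩ := v
  simp only [Matrix.mulVec, dotProduct, Fin.sum_univ_eight]
  simp only [pA_app0, pA_app1, pA_app2, pA_app3, pA_app4, pA_app5, pA_app6, pA_app7, G00, G01, G02, G03, G04, G05, G06, G07, G10, G11, G12, G13, G14, G15, G16, G17, G20, G21, G22, G23, G24, G25, G26, G27, G30, G31, G32, G33, G34, G35, G36, G37, G40, G41, G42, G43, G44, G45, G46, G47, G50, G51, G52, G53, G54, G55, G56, G57, G60, G61, G62, G63, G64, G65, G66, G67, G70, G71, G72, G73, G74, G75, G76, G77, fA, gA]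
  ring

lemma QB (v : Z4 × Z4) : (pB v) ⬝ᵥ G.mulVec (pB v) = fB v.1 + gB v.2 := by
  obtain ⟨⟨a,b,c,d⟩,⟨p,q,r,s⟩⟩ := v
  simp only [Matrix.mulVec, dotProduct, Fin.sum_univ_eight]
  simp only [pB_app0, pB_app1, pB_app2, pB_app3, pB_app4, pB_app5, pB_app6, pB_app7, G00, G01, G02, G03, G04, G05, G06, G07, G10, G11, G12, G13, G14, G15, G16, G17, G20, G21, G22, G23, G24, G25, G26, G27, G30, G31, G32, G33, G34, G35, G36, G37, G40, G41, G42, G43, G44, G45, G46, G47, G50, G51, G52, G53, G54, G55, G56, G57, G60, G61, G62, G63, G64, G65, G66, G67, G70, G71, G72, G73, G74, G75, G76, G77, fB, gB]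
  ring

lemma decomp (u : Fin 8 → ℤ) : (∃ v : Z4 × Z4, u = pA v) ∨ (∃ v : Z4 × Z4, u = pB v) := by
  rcases Int.even_or_odd (u 4 + u 6) with ⟨k, hk⟩ | ⟨k, hk⟩
  · left
    refine ⟨((-(u 2)-(u 5)-(u 7), -(u 1)+(u 2)-(u 3)-(u 4)+(u 5)+(u 7),
        -(u 0)+(u 3)-(u 5)+(u 7)+k, u 1 + u 4 - k), (u 4 - k, u 5 + k, -k, k - u 4 - u 7)), ?_⟩
    refine (funext8 _ _ ?_ ?_ ?_ ?_ ?_ ?_ ?_ ?_).symm <;>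
      simp only [pA_app0, pA_app1, pA_app2, pA_app3, pA_app4, pA_app5, pA_app6, pA_app7] <;> omega
  · right
    refine ⟨((-(u 2)-(u 5)-(u 7), -(u 1)+(u 2)-(u 3)-(u 4)+1+(u 5)+(u 7),
        -(u 0)+(u 3)-(u 5)+(u 7)+k, u 1 + u 4 - 1 - k), (u 4 - 1 - k, u 5 + k, -k, k - u 4 + 1 - u 7)), ?_⟩
    refine (funext8 _ _ ?_ ?_ ?_ ?_ ?_ ?_ ?_ ?_).symm <;>
      simp only [pB_app0, pB_app1, pB_app2, pB_app3, pB_app4, pB_app5, pB_app6, pB_app7] <;> omega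

lemma pA_inj : Function.Injective pA := by
  rintro ⟨⟨a,b,c,d⟩,⟨p,q,r,s⟩⟩ ⟨⟨a',b',c',d'⟩,⟨p',q',r',s'⟩⟩ h
  have h0 := congrFun h 0; have h1 := congrFun h 1; have h2 := congrFun h 2
  have h3 := congrFun h 3; have h4 := congrFun h 4; have h5 := congrFun h 5
  have h6 := congrFun h 6; have h7 := congrFun h 7
  simp only [pA_app0, pA_app1, pA_app2, pA_app3, pA_app4, pA_app5, pA_app6, pA_app7] at h0 h1 h2 h3 h4 h5 h6 h7
  simp only [Prod.mk.injEq]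
  omega

lemma pB_inj : Function.Injective pB := by
  rintro ⟨⟨a,b,c,d⟩,⟨p,q,r,s⟩⟩ ⟨⟨a',b',c',d'⟩,⟨p',q',r',s'⟩⟩ h
  have h0 := congrFun h 0; have h1 := congrFun h 1; have h2 := congrFun h 2
  have h3 := congrFun h 3; have h4 := congrFun h 4; have h5 := congrFun h 5
  have h6 := congrFun h 6; have h7 := congrFun h 7
  simp only [pB_app0, pB_app1, pB_app2, pB_app3, pB_app4, pB_app5, pB_app6, pB_app7] at h0 h1 h2 h3 h4 h5 h6 h7
  simp only [Prod.mk.injEq]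
  omega

lemma fA_nonneg (v : Z4) : 0 ≤ fA v := by
  obtain ⟨a,b,c,d⟩ := v
  have h : fA (a,b,c,d) = a^2+b^2+(c-d)^2+(a+b+c+d)^2 := by simp only [fA]; ring
  rw [h]; positivity

lemma gA_nonneg (v : Z4) : 0 ≤ gA v := by
  obtain ⟨p,q,r,s⟩ := v
  simp only [gA]; positivity

lemma fB_nonneg (v : Z4) : 0 ≤ fB v := by
  obtain ⟨a,b,c,d⟩ := v
  have h : fB (a,b,c,d) = a^2+(b-1)^2+(c-d)^2+(a+b+c+d)^2 - 1 := by simp only [fB]; ring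
  have h2 : fB (a,b,c,d) = 2*(a^2+b^2+c^2+d^2+a*b+a*c+a*d+b*c+b*d-b) := by simp only [fB]; ring
  have hge : -1 ≤ fB (a,b,c,d) := by
    rw [h]
    have := sq_nonneg a; have := sq_nonneg (b-1); have := sq_nonneg (c-d)
    have := sq_nonneg (a+b+c+d); linarith
  omega

lemma sqterm_nonneg (p : ℤ) : 0 ≤ p^2 + p := by nlinarith [sq_nonneg p, sq_nonneg (p+1)]

lemma gB_nonneg (v : Z4) : 0 ≤ gB v := by
  obtain ⟨p,q,r,s⟩ := v
  have h : gB (p,q,r,s) = 2*((p^2+p)+(q^2+q)+(r^2-r)+(s^2-s)) + 3 := by simp only [gB]; ring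
  have h1 := sqterm_nonneg p; have h2 := sqterm_nonneg q
  have h3 := sqterm_nonneg (-r); have h4 := sqterm_nonneg (-s)
  nlinarith [h1, h2, h3, h4]

lemma fA_bounds (a b c d : ℤ) (h : fA (a,b,c,d) ≤ 4) :
    -2 ≤ a ∧ a ≤ 2 ∧ -2 ≤ b ∧ b ≤ 2 ∧ -3 ≤ c ∧ c ≤ 3 ∧ -3 ≤ d ∧ d ≤ 3 := by
  have e1 : a^2+b^2+(c-d)^2+(a+b+c+d)^2 ≤ 4 := by
    have h' : fA (a,b,c,d) = a^2+b^2+(c-d)^2+(a+b+c+d)^2 := by simp only [fA]; ring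
    linarith [h'.symm.trans_le h]
  have e2 : 2*a^2+2*b^2+(2*c+a+b)^2+(2*d+a+b)^2 ≤ 8 := by
    have h' : 2 * fA (a,b,c,d) = 2*a^2+2*b^2+(2*c+a+b)^2+(2*d+a+b)^2 := by simp only [fA]; ring
    linarith
  have la1 : 4*a ≤ 8 := by nlinarith [sq_nonneg (a-2), sq_nonneg b, sq_nonneg (c-d), sq_nonneg (a+b+c+d)]
  have la2 : -8 ≤ 4*a := by nlinarith [sq_nonneg (a+2), sq_nonneg b, sq_nonneg (c-d), sq_nonneg (a+b+c+d)]
  have lb1 : 4*b ≤ 8 := by nlinarith [sq_nonneg (b-2), sq_nonneg a, sq_nonneg (c-d), sq_nonneg (a+b+c+d)]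
  have lb2 : -8 ≤ 4*b := by nlinarith [sq_nonneg (b+2), sq_nonneg a, sq_nonneg (c-d), sq_nonneg (a+b+c+d)]
  have lc1 : 6*(2*c+a+b) ≤ 17 := by nlinarith [sq_nonneg (2*c+a+b-3), sq_nonneg a, sq_nonneg b, sq_nonneg (2*d+a+b)]
  have lc2 : -17 ≤ 6*(2*c+a+b) := by nlinarith [sq_nonneg (2*c+a+b+3), sq_nonneg a, sq_nonneg b, sq_nonneg (2*d+a+b)]
  have ld1 : 6*(2*d+a+b) ≤ 17 := by nlinarith [sq_nonneg (2*d+a+b-3), sq_nonneg a, sq_nonneg b, sq_nonneg (2*c+a+b)]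
  have ld2 : -17 ≤ 6*(2*d+a+b) := by nlinarith [sq_nonneg (2*d+a+b+3), sq_nonneg a, sq_nonneg b, sq_nonneg (2*c+a+b)]
  omega

lemma fB_bounds (a b c d : ℤ) (h : fB (a,b,c,d) ≤ 4) :
    -2 ≤ a ∧ a ≤ 2 ∧ -1 ≤ b ∧ b ≤ 3 ∧ -4 ≤ c ∧ c ≤ 4 ∧ -4 ≤ d ∧ d ≤ 4 := by
  have e1 : a^2+(b-1)^2+(c-d)^2+(a+b+c+d)^2 ≤ 5 := by
    have h' : fB (a,b,c,d) = a^2+(b-1)^2+(c-d)^2+(a+b+c+d)^2 - 1 := by simp only [fB]; ring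
    linarith [h'.symm.trans_le h]
  have e2 : 2*a^2+2*(b-1)^2+(2*c+a+b)^2+(2*d+a+b)^2 ≤ 10 := by
    have h' : 2 * fB (a,b,c,d) = 2*a^2+2*(b-1)^2+(2*c+a+b)^2+(2*d+a+b)^2 - 2 := by simp only [fB]; ring
    linarith
  have la1 : 4*a ≤ 9 := by nlinarith [sq_nonneg (a-2), sq_nonneg (b-1), sq_nonneg (c-d), sq_nonneg (a+b+c+d)]
  have la2 : -9 ≤ 4*a := by nlinarith [sq_nonneg (a+2), sq_nonneg (b-1), sq_nonneg (c-d), sq_nonneg (a+b+c+d)]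
  have lb1 : 4*(b-1) ≤ 9 := by nlinarith [sq_nonneg (b-3), sq_nonneg a, sq_nonneg (c-d), sq_nonneg (a+b+c+d)]
  have lb2 : -9 ≤ 4*(b-1) := by nlinarith [sq_nonneg (b+1), sq_nonneg a, sq_nonneg (c-d), sq_nonneg (a+b+c+d)]
  have lc1 : 8*(2*c+a+b) ≤ 26 := by nlinarith [sq_nonneg (2*c+a+b-4), sq_nonneg a, sq_nonneg (b-1), sq_nonneg (2*d+a+b)]
  have lc2 : -26 ≤ 8*(2*c+a+b) := by nlinarith [sq_nonneg (2*c+a+b+4), sq_nonneg a, sq_nonneg (b-1), sq_nonneg (2*d+a+b)]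
  have ld1 : 8*(2*d+a+b) ≤ 26 := by nlinarith [sq_nonneg (2*d+a+b-4), sq_nonneg a, sq_nonneg (b-1), sq_nonneg (2*c+a+b)]
  have ld2 : -26 ≤ 8*(2*d+a+b) := by nlinarith [sq_nonneg (2*d+a+b+4), sq_nonneg a, sq_nonneg (b-1), sq_nonneg (2*c+a+b)]
  omega

lemma gA_bounds (p q r s : ℤ) (h : gA (p,q,r,s) ≤ 4) :
    -1 ≤ p ∧ p ≤ 1 ∧ -1 ≤ q ∧ q ≤ 1 ∧ -1 ≤ r ∧ r ≤ 1 ∧ -1 ≤ s ∧ s ≤ 1 := by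
  have h' : 2*(p^2+q^2+r^2+s^2) ≤ 4 := by
    have : gA (p,q,r,s) = 2*(p^2+q^2+r^2+s^2) := by simp only [gA]
    linarith [this.symm.trans_le h]
  have lp1 : 4*p ≤ 6 := by nlinarith [sq_nonneg (p-1), sq_nonneg q, sq_nonneg r, sq_nonneg s]
  have lp2 : -6 ≤ 4*p := by nlinarith [sq_nonneg (p+1), sq_nonneg q, sq_nonneg r, sq_nonneg s]
  have lq1 : 4*q ≤ 6 := by nlinarith [sq_nonneg (q-1), sq_nonneg p, sq_nonneg r, sq_nonneg s]
  have lq2 : -6 ≤ 4*q := by nlinarith [sq_nonneg (q+1), sq_nonneg p, sq_nonneg r, sq_nonneg s]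
  have lr1 : 4*r ≤ 6 := by nlinarith [sq_nonneg (r-1), sq_nonneg p, sq_nonneg q, sq_nonneg s]
  have lr2 : -6 ≤ 4*r := by nlinarith [sq_nonneg (r+1), sq_nonneg p, sq_nonneg q, sq_nonneg s]
  have ls1 : 4*s ≤ 6 := by nlinarith [sq_nonneg (s-1), sq_nonneg p, sq_nonneg q, sq_nonneg r]
  have ls2 : -6 ≤ 4*s := by nlinarith [sq_nonneg (s+1), sq_nonneg p, sq_nonneg q, sq_nonneg r]
  omega

lemma gB_bounds (p q r s : ℤ) (h : gB (p,q,r,s) ≤ 4) :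
    -1 ≤ p ∧ p ≤ 0 ∧ -1 ≤ q ∧ q ≤ 0 ∧ 0 ≤ r ∧ r ≤ 1 ∧ 0 ≤ s ∧ s ≤ 1 := by
  have h' : 2*((p^2+p)+(q^2+q)+(r^2-r)+(s^2-s)) + 3 ≤ 4 := by
    have : gB (p,q,r,s) = 2*((p^2+p)+(q^2+q)+(r^2-r)+(s^2-s)) + 3 := by simp only [gB]; ring
    linarith [this.symm.trans_le h]
  have h1 := sqterm_nonneg p; have h2 := sqterm_nonneg q
  have h3 := sqterm_nonneg (-r); have h4 := sqterm_nonneg (-s)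
  have hr3 : (-r)^2 + (-r) = r^2 - r := by ring
  have hs3 : (-s)^2 + (-s) = s^2 - s := by ring
  rw [hr3] at h3; rw [hs3] at h4
  have hp : p^2 + p ≤ 0 := by omega
  have hq : q^2 + q ≤ 0 := by omega
  have hr : r^2 - r ≤ 0 := by omega
  have hs : s^2 - s ≤ 0 := by omega
  have bp1 : p ≤ 0 := by nlinarith [sq_nonneg p]
  have bp2 : -1 ≤ p := by nlinarith [sq_nonneg (p+1)]
  have bq1 : q ≤ 0 := by nlinarith [sq_nonneg q]
  have bq2 : -1 ≤ q := by nlinarith [sq_nonneg (q+1)]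
  have br1 : 0 ≤ r := by nlinarith [sq_nonneg r]
  have br2 : r ≤ 1 := by nlinarith [sq_nonneg (r-1)]
  have bs1 : 0 ≤ s := by nlinarith [sq_nonneg s]
  have bs2 : s ≤ 1 := by nlinarith [sq_nonneg (s-1)]
  exact ⟨bp2, bp1, bq2, bq1, br1, br2, bs1, bs2⟩

noncomputable def boxfA : Finset Z4 := Finset.Icc (-2) 2 ×ˢ Finset.Icc (-2) 2 ×ˢ Finset.Icc (-3) 3 ×ˢ Finset.Icc (-3) 3
noncomputable def boxgA : Finset Z4 := Finset.Icc (-1) 1 ×ˢ Finset.Icc (-1) 1 ×ˢ Finset.Icc (-1) 1 ×ˢ Finset.Icc (-1) 1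
noncomputable def boxfB : Finset Z4 := Finset.Icc (-2) 2 ×ˢ Finset.Icc (-1) 3 ×ˢ Finset.Icc (-4) 4 ×ˢ Finset.Icc (-4) 4
noncomputable def boxgB : Finset Z4 := Finset.Icc (-1) 0 ×ˢ Finset.Icc (-1) 0 ×ˢ Finset.Icc 0 1 ×ˢ Finset.Icc 0 1

noncomputable def FA (m : ℤ) : Finset (Z4 × Z4) := (boxfA ×ˢ boxgA).filter (fun v => fA v.1 + gA v.2 = m)
noncomputable def FB (m : ℤ) : Finset (Z4 × Z4) := (boxfB ×ˢ boxgB).filter (fun v => fB v.1 + gB v.2 = m)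

lemma conv {α β : Type*} [DecidableEq α] [DecidableEq β] (f : α → ℤ) (g : β → ℤ)
    (hf : ∀ x, 0 ≤ f x) (hg : ∀ y, 0 ≤ g y) (s : Finset α) (t : Finset β) (m : ℤ) :
    ((s ×ˢ t).filter (fun p => f p.1 + g p.2 = m)).card
      = ∑ a ∈ Finset.Icc (0:ℤ) m,
          (s.filter (fun x => f x = a)).card * (t.filter (fun y => g y = m - a)).card := by
  rw [Finset.card_eq_sum_card_fiberwise (f := fun p => f p.1) (t := Finset.Icc (0:ℤ) m)
    (fun p hp => by
      simp only [Finset.mem_coe, Finset.mem_filter] at hp ⊢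
      rw [Finset.mem_Icc]
      exact ⟨hf _, by linarith [hg p.2, hp.2]⟩)]
  refine Finset.sum_congr rfl fun a _ => ?_
  rw [← Finset.card_product]
  congr 1
  ext p
  simp only [Finset.mem_filter, Finset.mem_product]
  constructor
  · rintro ⟨⟨⟨h1, h2⟩, h3⟩, h4⟩
    exact ⟨⟨h1, h4⟩, h2, by omega⟩
  · rintro ⟨⟨h1, h4⟩, h2, h5⟩
    exact ⟨⟨⟨h1, h2⟩, by omega⟩, h4⟩

lemma key (m : ℤ) (hm4 : m ≤ 4) :
    {u : Fin 8 → ℤ | u ⬝ᵥ G.mulVec u = m} = ↑(((FA m).image pA) ∪ ((FB m).image pB)) := by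
  ext u
  simp only [Set.mem_setOf_eq, Finset.coe_union, Set.mem_union, Finset.mem_coe,
    Finset.mem_union, Finset.mem_image]
  constructor
  · intro hu
    rcases decomp u with ⟨v, rfl⟩ | ⟨v, rfl⟩
    · left
      refine ⟨v, ?_, rfl⟩
      rw [QA] at hu
      obtain ⟨⟨a,b,c,d⟩,⟨p,q,r,s⟩⟩ := v
      have hfa := fA_nonneg (a,b,c,d); have hga := gA_nonneg (p,q,r,s)
      have hf4 : fA (a,b,c,d) ≤ 4 := by simp only at hu; linarith
      have hg4 : gA (p,q,r,s) ≤ 4 := by simp only at hu; linarith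
      simp only [FA, Finset.mem_filter, Finset.mem_product, boxfA, boxgA,
        Finset.mem_Icc]
      obtain ⟨b1,b2,b3,b4,b5,b6,b7,b8⟩ := fA_bounds a b c d hf4
      obtain ⟨c1,c2,c3,c4,c5,c6,c7,c8⟩ := gA_bounds p q r s hg4
      exact ⟨⟨⟨⟨b1,b2⟩,⟨b3,b4⟩,⟨b5,b6⟩,⟨b7,b8⟩⟩,⟨⟨c1,c2⟩,⟨c3,c4⟩,⟨c5,c6⟩,⟨c7,c8⟩⟩⟩, hu⟩
    · right
      refine ⟨v, ?_, rfl⟩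
      rw [QB] at hu
      obtain ⟨⟨a,b,c,d⟩,⟨p,q,r,s⟩⟩ := v
      have hfa := fB_nonneg (a,b,c,d); have hga := gB_nonneg (p,q,r,s)
      have hf4 : fB (a,b,c,d) ≤ 4 := by simp only at hu; linarith
      have hg4 : gB (p,q,r,s) ≤ 4 := by simp only at hu; linarith
      simp only [FB, Finset.mem_filter, Finset.mem_product, boxfB, boxgB,
        Finset.mem_Icc]
      obtain ⟨b1,b2,b3,b4,b5,b6,b7,b8⟩ := fB_bounds a b c d hf4
      obtain ⟨c1,c2,c3,c4,c5,c6,c7,c8⟩ := gB_bounds p q r s hg4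
      exact ⟨⟨⟨⟨b1,b2⟩,⟨b3,b4⟩,⟨b5,b6⟩,⟨b7,b8⟩⟩,⟨⟨c1,c2⟩,⟨c3,c4⟩,⟨c5,c6⟩,⟨c7,c8⟩⟩⟩, hu⟩
  · rintro (⟨v, hv, rfl⟩ | ⟨v, hv, rfl⟩)
    · rw [QA]
      simp only [FA, Finset.mem_filter] at hv
      exact hv.2
    · rw [QB]
      simp only [FB, Finset.mem_filter] at hv
      exact hv.2

lemma disjAB (m : ℤ) : Disjoint ((FA m).image pA) ((FB m).image pB) := by
  rw [Finset.disjoint_left]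
  rintro u hu1 hu2
  simp only [Finset.mem_image] at hu1 hu2
  obtain ⟨v, _, hv⟩ := hu1
  obtain ⟨w, _, hw⟩ := hu2
  obtain ⟨⟨a,b,c,d⟩,⟨p,q,r,s⟩⟩ := v
  obtain ⟨⟨a',b',c',d'⟩,⟨p',q',r',s'⟩⟩ := w
  have h4 : pA ((a,b,c,d),(p,q,r,s)) 4 = pB ((a',b',c',d'),(p',q',r',s')) 4 := by rw [hv, hw]
  have h6 : pA ((a,b,c,d),(p,q,r,s)) 6 = pB ((a',b',c',d'),(p',q',r',s')) 6 := by rw [hv, hw]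
  simp only [pA_app4, pA_app6, pB_app4, pB_app6] at h4 h6
  omega

set_option maxRecDepth 1000000 in
lemma count (m : ℤ) (hm4 : m ≤ 4) :
    Set.ncard {u : Fin 8 → ℤ | u ⬝ᵥ G.mulVec u = m}
      = (∑ a ∈ Finset.Icc (0:ℤ) m,
          (boxfA.filter (fun x => fA x = a)).card * (boxgA.filter (fun y => gA y = m - a)).card)
        + (∑ a ∈ Finset.Icc (0:ℤ) m,
          (boxfB.filter (fun x => fB x = a)).card * (boxgB.filter (fun y => gB y = m - a)).card) := by
  rw [key m hm4, Set.ncard_coe_finset,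
    Finset.card_union_of_disjoint (disjAB m),
    Finset.card_image_of_injOn (Function.Injective.injOn pA_inj),
    Finset.card_image_of_injOn (Function.Injective.injOn pB_inj)]
  simp only [FA, FB]
  rw [conv fA gA fA_nonneg gA_nonneg, conv fB gB fB_nonneg gB_nonneg]

set_option maxRecDepth 1000000 in
/-- The theta series of the lattice with Gram matrix `G` begins
`1 + 32q² + 128q³ + 240q⁴ + ⋯`: the number of `u ∈ ℤ⁸` with `u G uᵀ = m` is
`1, 0, 32, 128, 240` for `m = 0, 1, 2, 3, 4`. -/
theorem theta_coeffs_of_G :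
    Set.ncard {u : Fin 8 → ℤ | u ⬝ᵥ G.mulVec u = 0} = 1 ∧
    Set.ncard {u : Fin 8 → ℤ | u ⬝ᵥ G.mulVec u = 1} = 0 ∧
    Set.ncard {u : Fin 8 → ℤ | u ⬝ᵥ G.mulVec u = 2} = 32 ∧
    Set.ncard {u : Fin 8 → ℤ | u ⬝ᵥ G.mulVec u = 3} = 128 ∧
    Set.ncard {u : Fin 8 → ℤ | u ⬝ᵥ G.mulVec u = 4} = 240 := by
  refine ⟨?_, ?_, ?_, ?_, ?_⟩ <;> rw [count _ (by norm_num)] <;> decide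
end

section
/- Let G be the 8×8 integer matrix G = [[2,1,0,−1,0,2,−1,−2],[1,2,−1,0,1,0,−1,−2],[0,−1,2,−1,−1,2,0,2],[−1,0,−1,2,1,−2,1,0],[0,1,−1,1,3,0,0,0],[2,0,2,−2,0,6,0,0],[−1,−1,0,1,0,0,3,0],[−2,−2,2,0,0,0,0,6]]. Then for every real q with 0 < q < 1: Σ_{u∈ℤ⁸} q^{u G uᵀ} = f₁(q)⁴ − 8·f₁(q)²·Δ₄(q), where f₁(q) = (Σ_{m∈ℤ} q^{m²})·(Σ_{m∈ℤ} q^{2m²}) and Δ₄(q) = (1/4)·(Σ_{m∈ℤ} q^{2(m+1/2)²})²·(Σ_{m∈ℤ} (−q)^{m²})². That is, the theta series of the 8-dimensional odd 2-modular lattice with Gram matrix G equals f₁⁴ − 8f₁²Δ₄. -/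
open Matrix

noncomputable section

/-- `f₁(τ) = ϑ₃(τ)ϑ₃(2τ)`, the theta series of the 2-modular lattice `ℤ ⊕ √2ℤ`. -/
def f1 (q : ℝ) : ℝ := (∑' m : ℤ, q ^ ((m : ℝ) ^ 2)) * (∑' m : ℤ, q ^ (2 * (m : ℝ) ^ 2))

/-- `Δ₄(τ) = (1/4)ϑ₂(2τ)²ϑ₄(τ)²`. -/
def Delta4 (q : ℝ) : ℝ :=
  (1 / 4) * (∑' m : ℤ, q ^ (2 * ((m : ℝ) + 1/2) ^ 2)) ^ 2 * (∑' m : ℤ, (-q) ^ (m ^ 2)) ^ 2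

/-! ### Auxiliary data: a basis of the lattice and the glue-vector combinatorics -/

private def Bm : Matrix (Fin 8) (Fin 8) ℤ :=
  !![0,0,0,0,-2,0,0,0;
     0,0,0,0,-1,-1,-1,-1;
     0,0,0,0,0,0,0,2;
     0,0,0,0,1,1,-1,-1;
     -1,-1,-1,-1,0,0,-1,-1;
     -2,0,0,0,-2,0,0,2;
     -1,-1,1,1,1,1,0,0;
     0,0,-2,0,2,0,0,2]

private def Am : Matrix (Fin 8) (Fin 8) ℤ :=
  !![1,0,1,0,0,-1,0,0;
     -1,0,-1,1,-1,1,-1,0;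
     -1,0,1,0,0,0,0,-1;
     1,1,-1,0,-1,0,1,1;
     -1,0,0,0,0,0,0,0;
     1,-1,0,1,0,0,0,0;
     0,-1,-1,-1,0,0,0,0;
     0,0,1,0,0,0,0,0]

private def sv : Fin 4 → Fin 8 → ℤ :=
  ![![0,0,0,0,0,0,0,0], ![0,0,0,0,1,1,1,1], ![1,1,1,1,1,1,0,0], ![1,1,1,1,0,0,1,1]]

private def tv : Fin 4 → Fin 8 → ℤ :=
  ![![0,0,0,0,0,0,0,0], ![0,-1,0,0,0,0,0,0], ![0,0,0,1,-1,0,0,0], ![0,0,0,0,-1,0,0,0]]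

private def ab : Fin 8 → ℤ := ![0,0,0,0,1,0,1,0]
private def bb : Fin 8 → ℤ := ![0,1,0,1,1,0,0,0]

private def psi : Fin 4 × (Fin 8 → ℤ) → (Fin 8 → ℤ) := fun p => vecMul p.2 Am + tv p.1

private lemma hAB : Am * Bm = Matrix.diagonal (fun _ => (2:ℤ)) := by decide
private lemma hBA : Bm * Am = Matrix.diagonal (fun _ => (2:ℤ)) := by decide
private lemma hGram : Bm * Bmᵀ = G + G := by decide
private lemma htv : ∀ k, vecMul (tv k) Bm = sv k := by decide
private lemma hpar : ∀ j i, ((Bm j i : ZMod 2)) =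
    (ab j : ZMod 2) * (sv 2 i : ZMod 2) + (bb j : ZMod 2) * (sv 1 i : ZMod 2) := by decide
private lemma hsv01 : ∀ k i, sv k i = 0 ∨ sv k i = 1 := by decide

private lemma psi_vecMul (p : Fin 4 × (Fin 8 → ℤ)) :
    vecMul (psi p) Bm = fun i => 2 * p.2 i + sv p.1 i := by
  funext i
  rw [psi, add_vecMul, vecMul_vecMul, hAB, htv]
  simp only [Pi.add_apply, Matrix.vecMul_diagonal]
  ring

private lemma vecMul_inj {x y : Fin 8 → ℤ} (h : vecMul x Bm = vecMul y Bm) : x = y := by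
  have h2 : vecMul x (Bm * Am) = vecMul y (Bm * Am) := by
    rw [← vecMul_vecMul, ← vecMul_vecMul, h]
  rw [hBA] at h2
  funext i
  have h3 := congrFun h2 i
  simp only [Matrix.vecMul_diagonal] at h3
  omega

private lemma psi_bij : Function.Bijective psi := by
  constructor
  · rintro ⟨k, n⟩ ⟨k', n'⟩ h
    have h2 : (fun i => 2 * n i + sv k i) = fun i => 2 * n' i + sv k' i := by
      rw [← psi_vecMul ⟨k, n⟩, ← psi_vecMul ⟨k', n'⟩, h]
    have hco : ∀ i, 2 * n i + sv k i = 2 * n' i + sv k' i := fun i => congrFun h2 i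
    have hkk : k = k' := by
      have h0 := hco 0; have h4 := hco 4
      have hk04 : ∀ k1 k2 : Fin 4, (sv k1 0 - sv k2 0) % 2 = 0 →
          (sv k1 4 - sv k2 4) % 2 = 0 → k1 = k2 := by decide
      exact hk04 k k' (by omega) (by omega)
    subst hkk
    have hnn : n = n' := by funext i; have := hco i; omega
    rw [hnn]
  · intro u
    set v := vecMul u Bm with hv
    have hvz : ∀ i, ((v i : ZMod 2)) =
        (∑ j, (u j : ZMod 2) * (ab j : ZMod 2)) * (sv 2 i : ZMod 2)
        + (∑ j, (u j : ZMod 2) * (bb j : ZMod 2)) * (sv 1 i : ZMod 2) := by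
      intro i
      have hvi : v i = ∑ j, u j * Bm j i := by rw [hv]; rfl
      rw [hvi]
      push_cast
      rw [Finset.sum_mul, Finset.sum_mul, ← Finset.sum_add_distrib]
      congr 1
      funext j
      rw [hpar j i]
      ring
    have hcases : ∀ x : ZMod 2, x = 0 ∨ x = 1 := by decide
    have key : ∃ k : Fin 4, ∀ i, ((v i : ZMod 2)) = ((sv k i : ZMod 2)) := by
      rcases hcases (∑ j, (u j : ZMod 2) * (ab j : ZMod 2)) with hp | hp <;>
        rcases hcases (∑ j, (u j : ZMod 2) * (bb j : ZMod 2)) with hr | hr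
      · exact ⟨0, fun i => by rw [hvz i, hp, hr]; revert i; decide⟩
      · exact ⟨1, fun i => by rw [hvz i, hp, hr]; revert i; decide⟩
      · exact ⟨2, fun i => by rw [hvz i, hp, hr]; revert i; decide⟩
      · exact ⟨3, fun i => by rw [hvz i, hp, hr]; revert i; decide⟩
    obtain ⟨k, hk⟩ := key
    have hdvd : ∀ i, 2 ∣ (v i - sv k i) := by
      intro i
      have := (ZMod.intCast_eq_intCast_iff (v i) (sv k i) 2).mp (hk i)
      exact Int.ModEq.dvd (Int.ModEq.symm this)
    refine ⟨⟨k, fun i => (v i - sv k i) / 2⟩, ?_⟩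
    apply vecMul_inj
    rw [psi_vecMul]
    funext i
    have hd := hdvd i
    show 2 * ((v i - sv k i) / 2) + sv k i = vecMul u Bm i
    rw [← hv]
    omega

private lemma quad_eq (w : Fin 8 → ℤ) :
    (vecMul w Bm) ⬝ᵥ (vecMul w Bm) = 2 * (w ⬝ᵥ G.mulVec w) := by
  conv_lhs => rw [show (vecMul w Bm) = Bmᵀ.mulVec w from (mulVec_transpose Bm w).symm]
  rw [dotProduct_mulVec, mulVec_transpose, vecMul_vecMul, hGram, vecMul_add, add_dotProduct,
    ← dotProduct_mulVec]
  ring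

private lemma exp_eq (p : Fin 4 × (Fin 8 → ℤ)) :
    2 * (psi p ⬝ᵥ G.mulVec (psi p)) = ∑ i, (2 * p.2 i + sv p.1 i) ^ 2 := by
  rw [← quad_eq, psi_vecMul]
  simp only [dotProduct]
  exact Finset.sum_congr rfl fun i _ => (sq _).symm

/-! ### Analytic helper lemmas -/

private lemma summable_theta {q : ℝ} (c h : ℝ) (h0 : 0 < q) (h1 : q < 1) (hc : 1 ≤ c)
    (hh : |h| ≤ 1/2) :
    Summable (fun m : ℤ => q ^ (c * ((m : ℝ) + h) ^ 2)) := by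
  have geo : Summable (fun n : ℕ => q⁻¹ * q ^ (n : ℕ)) :=
    (summable_geometric_of_lt_one h0.le h1).mul_left _
  have bound : ∀ (x : ℝ), |x| ≤ 1/2 → ∀ n : ℕ, q ^ (c * ((n : ℝ) + x) ^ 2) ≤ q⁻¹ * q ^ (n : ℕ) := by
    intro x hx n
    have h2 : q ^ (c * ((n : ℝ) + x) ^ 2) ≤ q ^ ((n : ℝ) - 1) := by
      apply Real.rpow_le_rpow_of_exponent_ge h0 h1.le
      have hx1 : -(1/2) ≤ x := neg_le_of_abs_le hx
      have hn : (0:ℝ) ≤ (n:ℝ) := Nat.cast_nonneg n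
      nlinarith [sq_nonneg ((n:ℝ) + x), sq_nonneg ((n:ℝ) + x - 1), sq_nonneg ((n:ℝ) - 1)]
    calc q ^ (c * ((n : ℝ) + x) ^ 2) ≤ q ^ ((n : ℝ) - 1) := h2
      _ = q⁻¹ * q ^ (n : ℕ) := by
          rw [Real.rpow_sub h0, Real.rpow_one, Real.rpow_natCast]; ring
  apply Summable.of_nat_of_neg
  · exact geo.of_nonneg_of_le (fun n => Real.rpow_nonneg h0.le _) (bound h hh)
  · have he : ∀ n : ℕ, q ^ (c * (((-n : ℤ) : ℝ) + h) ^ 2) = q ^ (c * ((n : ℝ) + (-h)) ^ 2) := by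
      intro n; push_cast; ring_nf
    rw [funext he]
    exact geo.of_nonneg_of_le (fun n => Real.rpow_nonneg h0.le _)
      (bound (-h) (by rwa [abs_neg]))

private lemma pi_tsum {k : ℕ} (f : Fin k → ℤ → ℝ) (hnn : ∀ i m, 0 ≤ f i m)
    (hs : ∀ i, Summable (f i)) :
    Summable (fun n : Fin k → ℤ => ∏ i, f i (n i)) ∧
      (∑' n : Fin k → ℤ, ∏ i, f i (n i)) = ∏ i, ∑' m, f i m := by
  induction k with
  | zero =>
    constructor
    · simpa using summable_of_finite_support (Set.toFinite _)
    · simp [tsum_eq_single (fun (i : Fin 0) => (0:ℤ))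
        (fun b hb => absurd (Subsingleton.elim b _) hb)]
  | succ k ih =>
    obtain ⟨ihs, iht⟩ := ih (fun i => f i.succ) (fun i m => hnn _ _) (fun i => hs _)
    have hprodnn : ∀ n : Fin k → ℤ, (0:ℝ) ≤ ∏ i, f i.succ (n i) :=
      fun n => Finset.prod_nonneg fun i _ => hnn _ _
    have hnorm1 : Summable fun m : ℤ => ‖f 0 m‖ := by
      have h : (fun m : ℤ => ‖f 0 m‖) = f 0 := by
        funext m; rw [Real.norm_eq_abs, abs_of_nonneg (hnn 0 m)]
      rw [h]; exact hs 0
    have hnorm2 : Summable fun n : Fin k → ℤ => ‖∏ i, f i.succ (n i)‖ := by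
      have h : (fun n : Fin k → ℤ => ‖∏ i, f i.succ (n i)‖)
          = fun n => ∏ i, f i.succ (n i) := by
        funext n; rw [Real.norm_eq_abs, abs_of_nonneg (hprodnn n)]
      rw [h]; exact ihs
    have hsg : Summable (fun p : ℤ × (Fin k → ℤ) => f 0 p.1 * ∏ i, f i.succ (p.2 i)) := by
      have := summable_mul_of_summable_norm hnorm1 hnorm2
      exact this
    have hcomp : (fun n : Fin (k+1) → ℤ => ∏ i, f i (n i))
        = fun n => (fun p : ℤ × (Fin k → ℤ) => f 0 p.1 * ∏ i, f i.succ (p.2 i))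
            ((Fin.consEquiv (fun _ : Fin (k+1) => ℤ)).symm n) := by
      funext n
      show ∏ i, f i (n i) = f 0 (n 0) * ∏ i : Fin k, f i.succ (Fin.tail n i)
      rw [Fin.prod_univ_succ]
      rfl
    have ht1 := (Fin.consEquiv (fun _ : Fin (k+1) => ℤ)).symm.tsum_eq
      (fun p : ℤ × (Fin k → ℤ) => f 0 p.1 * ∏ i, f i.succ (p.2 i))
    have hs1 := ((Fin.consEquiv (fun _ : Fin (k+1) => ℤ)).symm.summable_iff
      (f := fun p : ℤ × (Fin k → ℤ) => f 0 p.1 * ∏ i, f i.succ (p.2 i))).mpr hsg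
    constructor
    · rw [hcomp]; exact hs1
    · have hmul := tsum_mul_tsum_of_summable_norm hnorm1 hnorm2
      rw [hcomp, ht1, ← hmul, Fin.prod_univ_succ, iht]

private lemma rpow_fin_sum {q : ℝ} (hq : 0 < q) {k : ℕ} (r : Fin k → ℝ) :
    q ^ (∑ i, r i) = ∏ i, q ^ (r i) := by
  classical
  induction (Finset.univ : Finset (Fin k)) using Finset.induction with
  | empty => simp
  | insert _ _ h ih => rw [Finset.sum_insert h, Finset.prod_insert h, Real.rpow_add hq, ih]

private lemma coset (q : ℝ) (h0 : 0 < q) (h1 : q < 1) (k : Fin 4) :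
    Summable (fun n : Fin 8 → ℤ => q ^ (psi (k, n) ⬝ᵥ G.mulVec (psi (k, n)))) ∧
    (∑' n : Fin 8 → ℤ, q ^ (psi (k, n) ⬝ᵥ G.mulVec (psi (k, n))))
      = ∏ i, ∑' m : ℤ, q ^ (2 * ((m : ℝ) + (sv k i : ℝ)/2) ^ 2) := by
  have hpoint : ∀ n : Fin 8 → ℤ, (q ^ (psi (k, n) ⬝ᵥ G.mulVec (psi (k, n))) : ℝ)
      = ∏ i, q ^ (2 * ((n i : ℝ) + (sv k i : ℝ)/2) ^ 2) := by
    intro n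
    have he := exp_eq (k, n)
    have h2 : (2:ℝ) * ((psi (k, n) ⬝ᵥ G.mulVec (psi (k, n)) : ℤ) : ℝ)
        = ∑ i, (2 * (n i : ℝ) + (sv k i : ℝ)) ^ 2 := by
      exact_mod_cast congrArg (fun z : ℤ => (z : ℝ)) he
    have h3 : ∑ i, ((2 * (n i : ℝ) + (sv k i : ℝ)) ^ 2)
        = 2 * ∑ i, (2 * ((n i : ℝ) + (sv k i : ℝ)/2) ^ 2) := by
      rw [Finset.mul_sum]
      exact Finset.sum_congr rfl fun i _ => by ring
    have h4 : ((psi (k, n) ⬝ᵥ G.mulVec (psi (k, n)) : ℤ) : ℝ)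
        = ∑ i, (2 * ((n i : ℝ) + (sv k i : ℝ)/2) ^ 2) := by
      rw [h3] at h2; linarith
    rw [← Real.rpow_intCast q, h4, rpow_fin_sum h0]
  have hsum : ∀ i : Fin 8, Summable (fun m : ℤ => q ^ (2 * ((m : ℝ) + (sv k i : ℝ)/2) ^ 2)) := by
    intro i
    apply summable_theta 2 ((sv k i : ℝ)/2) h0 h1 (by norm_num)
    rcases hsv01 k i with h | h <;> rw [h] <;> simp [abs_of_nonneg]
  have hnn : ∀ (i : Fin 8) (m : ℤ), 0 ≤ q ^ (2 * ((m : ℝ) + (sv k i : ℝ)/2) ^ 2) :=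
    fun i m => Real.rpow_nonneg h0.le _
  obtain ⟨hS, hT⟩ := pi_tsum (fun i m => q ^ (2 * ((m : ℝ) + (sv k i : ℝ)/2) ^ 2)) hnn hsum
  constructor
  · rw [funext hpoint]; exact hS
  · rw [tsum_congr hpoint]; exact hT

private lemma fb (q : ℝ) (i : Fin 8) (k : Fin 4) (h : sv k i = 0) :
    (∑' m : ℤ, q ^ (2 * ((m : ℝ) + (sv k i : ℝ)/2) ^ 2)) = ∑' m : ℤ, q ^ (2 * (m : ℝ) ^ 2) := by
  rw [h]; norm_num

private lemma fc (q : ℝ) (i : Fin 8) (k : Fin 4) (h : sv k i = 1) :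
    (∑' m : ℤ, q ^ (2 * ((m : ℝ) + (sv k i : ℝ)/2) ^ 2))
      = ∑' m : ℤ, q ^ (2 * ((m : ℝ) + 1/2) ^ 2) := by
  rw [h]; norm_num

private lemma lattice_sum (q : ℝ) (h0 : 0 < q) (h1 : q < 1) :
    (∑' u : Fin 8 → ℤ, q ^ (u ⬝ᵥ G.mulVec u))
      = (∑' m : ℤ, q ^ (2 * (m : ℝ) ^ 2)) ^ 8
        + (∑' m : ℤ, q ^ (2 * (m : ℝ) ^ 2)) ^ 4 * (∑' m : ℤ, q ^ (2 * ((m : ℝ) + 1/2) ^ 2)) ^ 4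
        + 2 * (∑' m : ℤ, q ^ (2 * (m : ℝ) ^ 2)) ^ 2
            * (∑' m : ℤ, q ^ (2 * ((m : ℝ) + 1/2) ^ 2)) ^ 6 := by
  have hE := (Equiv.ofBijective psi psi_bij).tsum_eq (fun u => (q ^ (u ⬝ᵥ G.mulVec u) : ℝ))
  rw [← hE]
  have hS : Summable (fun p : Fin 4 × (Fin 8 → ℤ) => (q ^ (psi p ⬝ᵥ G.mulVec (psi p)) : ℝ)) := by
    apply (summable_prod_of_nonneg ?_).mpr
    constructor
    · intro k; exact (coset q h0 h1 k).1
    · apply summable_of_finite_support (Set.toFinite _)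
    · intro p; exact zpow_nonneg h0.le _
  have hps : (fun p : Fin 4 × (Fin 8 → ℤ) =>
      (q ^ ((Equiv.ofBijective psi psi_bij) p ⬝ᵥ G.mulVec ((Equiv.ofBijective psi psi_bij) p)) : ℝ))
      = fun p => (q ^ (psi p ⬝ᵥ G.mulVec (psi p)) : ℝ) := rfl
  rw [hps, Summable.tsum_prod hS, tsum_fintype, Fin.sum_univ_four]
  rw [(coset q h0 h1 0).2, (coset q h0 h1 1).2, (coset q h0 h1 2).2, (coset q h0 h1 3).2]
  rw [Fin.prod_univ_eight, Fin.prod_univ_eight, Fin.prod_univ_eight, Fin.prod_univ_eight]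
  rw [fb q 0 0 (by decide),
    fb q 1 0 (by decide),
    fb q 2 0 (by decide),
    fb q 3 0 (by decide),
    fb q 4 0 (by decide),
    fb q 5 0 (by decide),
    fb q 6 0 (by decide),
    fb q 7 0 (by decide),
    fb q 0 1 (by decide),
    fb q 1 1 (by decide),
    fb q 2 1 (by decide),
    fb q 3 1 (by decide),
    fc q 4 1 (by decide),
    fc q 5 1 (by decide),
    fc q 6 1 (by decide),
    fc q 7 1 (by decide),
    fc q 0 2 (by decide),
    fc q 1 2 (by decide),
    fc q 2 2 (by decide),
    fc q 3 2 (by decide),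
    fc q 4 2 (by decide),
    fc q 5 2 (by decide),
    fb q 6 2 (by decide),
    fb q 7 2 (by decide),
    fc q 0 3 (by decide),
    fc q 1 3 (by decide),
    fc q 2 3 (by decide),
    fc q 3 3 (by decide),
    fb q 4 3 (by decide),
    fb q 5 3 (by decide),
    fc q 6 3 (by decide),
    fc q 7 3 (by decide)]
  ring

/-! ### The two classical 2-dimensional theta identities -/

private def psi2 : Fin 2 × (ℤ × ℤ) → ℤ × ℤ :=
  fun p => (p.2.1 + p.2.2 + (p.1.val : ℤ), p.2.1 - p.2.2)

private lemma psi2_bij : Function.Bijective psi2 := by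
  constructor
  · rintro ⟨k, u, v⟩ ⟨k', u', v'⟩ h
    simp only [psi2, Prod.mk.injEq] at h
    obtain ⟨h1, h2⟩ := h
    have hk : k.val < 2 := k.isLt
    have hk' : k'.val < 2 := k'.isLt
    have hkk : k = k' := Fin.ext (by omega)
    subst hkk
    simp only [Prod.mk.injEq]
    refine ⟨trivial, by omega, by omega⟩
  · rintro ⟨m, n⟩
    rcases Int.even_or_odd (m + n) with ⟨c, hc⟩ | ⟨c, hc⟩
    · refine ⟨⟨0, c, m - c⟩, ?_⟩
      simp only [psi2, Prod.mk.injEq, Fin.val_zero]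
      exact ⟨by omega, by omega⟩
    · refine ⟨⟨1, c, m - c - 1⟩, ?_⟩
      simp only [psi2, Prod.mk.injEq, Fin.val_one]
      exact ⟨by omega, by omega⟩

private lemma split2 (F : ℤ × ℤ → ℝ) (hF : Summable F) :
    ∑' p : ℤ × ℤ, F p
      = (∑' p : ℤ × ℤ, F (psi2 (0, p))) + (∑' p : ℤ × ℤ, F (psi2 (1, p))) := by
  rw [← (Equiv.ofBijective psi2 psi2_bij).tsum_eq F]
  have hps : (fun w : Fin 2 × (ℤ × ℤ) => F ((Equiv.ofBijective psi2 psi2_bij) w))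
      = fun w => F (psi2 w) := rfl
  have hS : Summable (fun w : Fin 2 × (ℤ × ℤ) => F (psi2 w)) := by
    have := (Equiv.ofBijective psi2 psi2_bij).summable_iff.mpr hF
    exact this
  rw [hps, Summable.tsum_prod hS, tsum_fintype, Fin.sum_univ_two]

private lemma sq_identity (q : ℝ) (h0 : 0 < q) (h1 : q < 1) :
    (∑' m : ℤ, q ^ ((m : ℝ) ^ 2)) ^ 2
      = (∑' m : ℤ, q ^ (2 * (m : ℝ) ^ 2)) ^ 2 + (∑' m : ℤ, q ^ (2 * ((m : ℝ) + 1/2) ^ 2)) ^ 2 := by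
  have sTa : Summable (fun m : ℤ => q ^ ((m : ℝ) ^ 2)) :=
    (summable_theta 1 0 h0 h1 le_rfl (by norm_num)).congr (fun m => by norm_num)
  have sTb : Summable (fun m : ℤ => q ^ (2 * (m : ℝ) ^ 2)) :=
    (summable_theta 2 0 h0 h1 (by norm_num) (by norm_num)).congr (fun m => by norm_num)
  have sTc : Summable (fun m : ℤ => q ^ (2 * ((m : ℝ) + 1/2) ^ 2)) :=
    summable_theta 2 (1/2) h0 h1 (by norm_num) (by rw [abs_of_nonneg] <;> norm_num)
  have hnorm : ∀ (f : ℤ → ℝ), (∀ m, 0 ≤ f m) → Summable f → Summable (fun m => ‖f m‖) := by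
    intro f hf hs
    have h : (fun m => ‖f m‖) = f := funext fun m => by
      rw [Real.norm_eq_abs, abs_of_nonneg (hf m)]
    rw [h]; exact hs
  have na := hnorm _ (fun m => Real.rpow_nonneg h0.le _) sTa
  have nb := hnorm _ (fun m => Real.rpow_nonneg h0.le _) sTb
  have nc := hnorm _ (fun m => Real.rpow_nonneg h0.le _) sTc
  have hmul := tsum_mul_tsum_of_summable_norm na na
  have hFeq : (fun p : ℤ × ℤ => q ^ ((p.1 : ℝ) ^ 2) * q ^ ((p.2 : ℝ) ^ 2))
      = fun p : ℤ × ℤ => q ^ ((p.1 : ℝ) ^ 2 + (p.2 : ℝ) ^ 2) :=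
    funext fun p => (Real.rpow_add h0 _ _).symm
  have hF : Summable (fun p : ℤ × ℤ => q ^ ((p.1 : ℝ) ^ 2 + (p.2 : ℝ) ^ 2)) := by
    rw [← hFeq]
    have := summable_mul_of_summable_norm na na
    exact this
  have h5 : (∑' m : ℤ, q ^ ((m : ℝ) ^ 2)) ^ 2
      = ∑' p : ℤ × ℤ, q ^ ((p.1 : ℝ) ^ 2 + (p.2 : ℝ) ^ 2) := by
    rw [sq, hmul, hFeq]
  rw [h5, split2 _ hF]
  have hc0 : ∀ p : ℤ × ℤ, q ^ (((psi2 (0, p)).1 : ℝ) ^ 2 + ((psi2 (0, p)).2 : ℝ) ^ 2)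
      = q ^ (2 * (p.1 : ℝ) ^ 2) * q ^ (2 * (p.2 : ℝ) ^ 2) := by
    rintro ⟨u, v⟩
    rw [← Real.rpow_add h0]
    congr 1
    show (((u + v + 0 : ℤ) : ℝ)) ^ 2 + (((u - v : ℤ) : ℝ)) ^ 2 = _
    push_cast
    ring
  have hc1 : ∀ p : ℤ × ℤ, q ^ (((psi2 (1, p)).1 : ℝ) ^ 2 + ((psi2 (1, p)).2 : ℝ) ^ 2)
      = q ^ (2 * ((p.1 : ℝ) + 1/2) ^ 2) * q ^ (2 * ((p.2 : ℝ) + 1/2) ^ 2) := by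
    rintro ⟨u, v⟩
    rw [← Real.rpow_add h0]
    congr 1
    show (((u + v + 1 : ℤ) : ℝ)) ^ 2 + (((u - v : ℤ) : ℝ)) ^ 2 = _
    push_cast
    ring
  rw [tsum_congr hc0, tsum_congr hc1,
    ← tsum_mul_tsum_of_summable_norm nb nb, ← tsum_mul_tsum_of_summable_norm nc nc]
  ring

private lemma d_identity (q : ℝ) (h0 : 0 < q) (h1 : q < 1) :
    (∑' m : ℤ, (-q) ^ (m ^ 2)) ^ 2
      = (∑' m : ℤ, q ^ (2 * (m : ℝ) ^ 2)) ^ 2 - (∑' m : ℤ, q ^ (2 * ((m : ℝ) + 1/2) ^ 2)) ^ 2 := by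
  have hterm : ∀ m : ℤ, ((-q : ℝ)) ^ (m ^ 2) = (-1 : ℝ) ^ m * q ^ ((m : ℝ) ^ 2) := by
    intro m
    have hq : ((-q : ℝ)) ^ (m ^ 2) = ((-1 : ℝ) * q) ^ (m ^ 2) := by norm_num
    rw [hq, mul_zpow]
    congr 1
    · rcases Int.even_or_odd m with he | ho
      · rw [Even.neg_one_zpow (by rw [sq]; exact he.mul_right m), he.neg_one_zpow]
      · rw [Odd.neg_one_zpow (ho.pow), ho.neg_one_zpow]
    · rw [← Real.rpow_intCast q (m ^ 2)]
      congr 1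
      push_cast
      ring
  have sTb : Summable (fun m : ℤ => q ^ (2 * (m : ℝ) ^ 2)) :=
    (summable_theta 2 0 h0 h1 (by norm_num) (by norm_num)).congr (fun m => by norm_num)
  have sTc : Summable (fun m : ℤ => q ^ (2 * ((m : ℝ) + 1/2) ^ 2)) :=
    summable_theta 2 (1/2) h0 h1 (by norm_num) (by rw [abs_of_nonneg] <;> norm_num)
  have hnorm : ∀ (f : ℤ → ℝ), (∀ m, 0 ≤ f m) → Summable f → Summable (fun m => ‖f m‖) := by
    intro f hf hs
    have h : (fun m => ‖f m‖) = f := funext fun m => by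
      rw [Real.norm_eq_abs, abs_of_nonneg (hf m)]
    rw [h]; exact hs
  have nb := hnorm _ (fun m => Real.rpow_nonneg h0.le _) sTb
  have nc := hnorm _ (fun m => Real.rpow_nonneg h0.le _) sTc
  have nd : Summable (fun m : ℤ => ‖(-1 : ℝ) ^ m * q ^ ((m : ℝ) ^ 2)‖) := by
    have h : (fun m : ℤ => ‖(-1 : ℝ) ^ m * q ^ ((m : ℝ) ^ 2)‖)
        = fun m : ℤ => q ^ ((m : ℝ) ^ 2) := by
      funext m
      have habs : |(-1 : ℝ) ^ m| = 1 := by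
        rcases Int.even_or_odd m with he | ho
        · rw [he.neg_one_zpow]; norm_num
        · rw [ho.neg_one_zpow]; norm_num
      rw [norm_mul, Real.norm_eq_abs, Real.norm_eq_abs, habs,
        abs_of_nonneg (Real.rpow_nonneg h0.le _), one_mul]
    rw [h]
    exact (summable_theta 1 0 h0 h1 le_rfl (by norm_num)).congr (fun m => by norm_num)
  have hd : (∑' m : ℤ, (-q) ^ (m ^ 2)) = ∑' m : ℤ, (-1 : ℝ) ^ m * q ^ ((m : ℝ) ^ 2) :=
    tsum_congr hterm
  have hmul := tsum_mul_tsum_of_summable_norm nd nd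
  have hFeq : (fun p : ℤ × ℤ => ((-1 : ℝ) ^ p.1 * q ^ ((p.1 : ℝ) ^ 2))
        * ((-1 : ℝ) ^ p.2 * q ^ ((p.2 : ℝ) ^ 2)))
      = fun p : ℤ × ℤ => (-1 : ℝ) ^ (p.1 + p.2) * q ^ ((p.1 : ℝ) ^ 2 + (p.2 : ℝ) ^ 2) := by
    funext p
    rw [zpow_add₀ (by norm_num : (-1 : ℝ) ≠ 0), Real.rpow_add h0]
    ring
  have hF : Summable (fun p : ℤ × ℤ =>
      (-1 : ℝ) ^ (p.1 + p.2) * q ^ ((p.1 : ℝ) ^ 2 + (p.2 : ℝ) ^ 2)) := by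
    rw [← hFeq]
    have := summable_mul_of_summable_norm nd nd
    exact this
  have h5 : (∑' m : ℤ, (-q) ^ (m ^ 2)) ^ 2
      = ∑' p : ℤ × ℤ, (-1 : ℝ) ^ (p.1 + p.2) * q ^ ((p.1 : ℝ) ^ 2 + (p.2 : ℝ) ^ 2) := by
    rw [sq, hd, hmul, hFeq]
  rw [h5, split2 _ hF]
  have hc0 : ∀ p : ℤ × ℤ, (-1 : ℝ) ^ ((psi2 (0, p)).1 + (psi2 (0, p)).2)
        * q ^ (((psi2 (0, p)).1 : ℝ) ^ 2 + ((psi2 (0, p)).2 : ℝ) ^ 2)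
      = q ^ (2 * (p.1 : ℝ) ^ 2) * q ^ (2 * (p.2 : ℝ) ^ 2) := by
    rintro ⟨u, v⟩
    show (-1 : ℝ) ^ ((u + v + 0) + (u - v)) * q ^ (((u + v + 0 : ℤ) : ℝ) ^ 2
        + ((u - v : ℤ) : ℝ) ^ 2) = _
    rw [show (u + v + 0) + (u - v) = 2 * u from by ring,
      Even.neg_one_zpow ⟨u, by ring⟩, one_mul, ← Real.rpow_add h0]
    congr 1
    push_cast
    ring
  have hc1 : ∀ p : ℤ × ℤ, (-1 : ℝ) ^ ((psi2 (1, p)).1 + (psi2 (1, p)).2)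
        * q ^ (((psi2 (1, p)).1 : ℝ) ^ 2 + ((psi2 (1, p)).2 : ℝ) ^ 2)
      = -(q ^ (2 * ((p.1 : ℝ) + 1/2) ^ 2) * q ^ (2 * ((p.2 : ℝ) + 1/2) ^ 2)) := by
    rintro ⟨u, v⟩
    show (-1 : ℝ) ^ ((u + v + 1) + (u - v)) * q ^ (((u + v + 1 : ℤ) : ℝ) ^ 2
        + ((u - v : ℤ) : ℝ) ^ 2) = _
    rw [show (u + v + 1) + (u - v) = 2 * u + 1 from by ring,
      Odd.neg_one_zpow ⟨u, by ring⟩, ← Real.rpow_add h0]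
    rw [neg_one_mul]
    congr 2
    push_cast
    ring
  rw [tsum_congr hc0, tsum_congr hc1, tsum_neg,
    ← tsum_mul_tsum_of_summable_norm nb nb, ← tsum_mul_tsum_of_summable_norm nc nc]
  ring

/-- For `0 < q < 1`, the theta series of the 8-dimensional odd
2-modular lattice with Gram matrix `G` equals `f₁⁴ − 8f₁²Δ₄`. -/
theorem theta_of_G_eq (q : ℝ) (h0 : 0 < q) (h1 : q < 1) :
    (∑' u : Fin 8 → ℤ, q ^ (u ⬝ᵥ G.mulVec u)) =
      f1 q ^ 4 - 8 * f1 q ^ 2 * Delta4 q := by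
  have hL := lattice_sum q h0 h1
  have hA := sq_identity q h0 h1
  have hD := d_identity q h0 h1
  rw [hL]
  simp only [f1, Delta4]
  set a := ∑' m : ℤ, q ^ ((m : ℝ) ^ 2) with ha
  set b := ∑' m : ℤ, q ^ (2 * (m : ℝ) ^ 2) with hb
  set c := ∑' m : ℤ, q ^ (2 * ((m : ℝ) + 1/2) ^ 2) with hc
  set d := ∑' m : ℤ, (-q) ^ (m ^ 2) with hd
  linear_combination (-(a^2 + b^2 + c^2) * b^4 + 2 * b^2 * c^2 * d^2) * hA
    + (2 * (b^2 + c^2) * b^2 * c^2) * hD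
end
end
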